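/- arXiv:2604.02579 — 2 statements merged into one kernel-verified Lean document; each statement's English description precedes it below -/
import Mathlib

section
/- Let ρ : [0,T] × [0,1] → ℝ be a C² (in space) and C¹ (in time) solution of the heat equation ∂_t ρ = ∂²_{uu} ρ on (0,T]×(0,1) with the Wentzell boundary condition ∂²_{uu}ρ(t,0) = α ∂_u ρ(t,0) and Neumann condition ∂_u ρ(t,1) = 0 for all t ∈ (0,T]. Then the quantity t ↦ ρ(t,0)/α + ∫₀¹ ρ(t,u) du is constant in time. -/
open Set MeasureTheory Filter Topology Polynomial

noncomputable section

/-- At a maximum at the left endpoint of `[0,1]`, the (one-sided) derivative is `≤ 0`. -/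
lemma deriv_nonpos_left {f : ℝ → ℝ} {f' : ℝ}
    (hd : HasDerivWithinAt f f' (Set.Icc (0:ℝ) 1) 0)
    (hmax : ∀ u ∈ Set.Icc (0:ℝ) 1, f u ≤ f 0) : f' ≤ 0 := by
  have hset : Set.Icc (0:ℝ) 1 \ {0} = Set.Ioc (0:ℝ) 1 := by
    ext x; constructor
    · rintro ⟨⟨h0, h1⟩, hne⟩
      exact ⟨lt_of_le_of_ne h0 (fun h => hne (by simpa using h.symm)), h1⟩
    · rintro ⟨h0, h1⟩; exact ⟨⟨le_of_lt h0, h1⟩, by simp [ne_of_gt h0]⟩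
  have h := hasDerivWithinAt_iff_tendsto_slope.mp hd
  rw [hset] at h
  have hne : (𝓝[Set.Ioc (0:ℝ) 1] (0:ℝ)).NeBot := by
    apply mem_closure_iff_nhdsWithin_neBot.mp
    rw [closure_Ioc (by norm_num : (0:ℝ) ≠ 1)]
    exact ⟨le_refl _, by norm_num⟩
  refine le_of_tendsto h (eventually_of_mem self_mem_nhdsWithin ?_)
  intro u hu
  have h1 : f u - f 0 ≤ 0 := sub_nonpos.mpr (hmax u ⟨le_of_lt hu.1, hu.2⟩)
  have h2 : (0:ℝ) < u - 0 := by simpa using hu.1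
  rw [slope_def_field]
  have : (f u - f 0) / (u - 0) ≤ 0 := div_nonpos_iff.mpr (Or.inr ⟨h1, le_of_lt h2⟩)
  simpa [div_eq_iff, sub_zero] using this

/-- At a maximum at the right endpoint of `[0,1]`, the (one-sided) derivative is `≥ 0`. -/
lemma deriv_nonneg_right {f : ℝ → ℝ} {f' : ℝ}
    (hd : HasDerivWithinAt f f' (Set.Icc (0:ℝ) 1) 1)
    (hmax : ∀ u ∈ Set.Icc (0:ℝ) 1, f u ≤ f 1) : 0 ≤ f' := by
  have hset : Set.Icc (0:ℝ) 1 \ {1} = Set.Ico (0:ℝ) 1 := by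
    ext x; constructor
    · rintro ⟨⟨h0, h1⟩, hne⟩
      exact ⟨h0, lt_of_le_of_ne h1 (fun h => hne (by simpa using h))⟩
    · rintro ⟨h0, h1⟩; exact ⟨⟨h0, le_of_lt h1⟩, by simp [ne_of_lt h1]⟩
  have h := hasDerivWithinAt_iff_tendsto_slope.mp hd
  rw [hset] at h
  have hne : (𝓝[Set.Ico (0:ℝ) 1] (1:ℝ)).NeBot := by
    apply mem_closure_iff_nhdsWithin_neBot.mp
    rw [closure_Ico (by norm_num : (0:ℝ) ≠ 1)]
    exact ⟨by norm_num, le_refl _⟩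
  refine ge_of_tendsto h (eventually_of_mem self_mem_nhdsWithin ?_)
  intro u hu
  have h1 : f u - f 1 ≤ 0 := sub_nonpos.mpr (hmax u ⟨hu.1, le_of_lt hu.2⟩)
  have h2 : u - 1 < 0 := sub_neg.mpr hu.2
  rw [slope_def_field]
  exact div_nonneg_of_nonpos h1 (le_of_lt h2)

/-- If `φ` has a derivative at `t₀` and `φ ≤ φ t₀` on `[t₁, t₀]` with `t₁ < t₀`,
then the derivative is `≥ 0`. -/
lemma deriv_nonneg_of_max_from_left {φ : ℝ → ℝ} {φ' t₁ t₀ : ℝ}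
    (hd : HasDerivAt φ φ' t₀) (h1 : t₁ < t₀)
    (hmax : ∀ σ ∈ Set.Icc t₁ t₀, φ σ ≤ φ t₀) : 0 ≤ φ' := by
  have h := hasDerivAt_iff_tendsto_slope.mp hd
  have hmono : 𝓝[Set.Ioo t₁ t₀] t₀ ≤ 𝓝[≠] t₀ := by
    apply nhdsWithin_mono
    intro x hx
    simp [ne_of_lt hx.2]
  have h2 : Tendsto (slope φ t₀) (𝓝[Set.Ioo t₁ t₀] t₀) (𝓝 φ') := h.mono_left hmono
  have hne : (𝓝[Set.Ioo t₁ t₀] t₀).NeBot := by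
    apply mem_closure_iff_nhdsWithin_neBot.mp
    rw [closure_Ioo (ne_of_lt h1)]
    exact ⟨le_of_lt h1, le_refl _⟩
  refine ge_of_tendsto h2 (eventually_of_mem self_mem_nhdsWithin ?_)
  intro σ hσ
  have ha : φ σ - φ t₀ ≤ 0 := sub_nonpos.mpr (hmax σ ⟨le_of_lt hσ.1, le_of_lt hσ.2⟩)
  have hb : σ - t₀ < 0 := sub_neg.mpr hσ.2
  rw [slope_def_field]
  exact div_nonneg_of_nonpos ha (le_of_lt hb)

end

noncomputable section

/-- Second derivative test at a max attained at `u₀ < 1` with vanishing first derivative. -/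
lemma d2_nonpos_of_max_lt_one {f : ℝ → ℝ} {u₀ : ℝ}
    (hf : ContDiffOn ℝ 2 f (Set.Icc (0:ℝ) 1)) (hu₀ : u₀ ∈ Set.Icc (0:ℝ) 1) (hu₀1 : u₀ < 1)
    (hmax : ∀ u ∈ Set.Icc (0:ℝ) 1, f u ≤ f u₀)
    (hf1 : derivWithin f (Set.Icc (0:ℝ) 1) u₀ = 0) :
    derivWithin (derivWithin f (Set.Icc (0:ℝ) 1)) (Set.Icc (0:ℝ) 1) u₀ ≤ 0 := by
  set f1 := derivWithin f (Set.Icc (0:ℝ) 1) with hf1def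
  by_contra hcon
  push_neg at hcon
  have hUD : UniqueDiffOn ℝ (Set.Icc (0:ℝ) 1) := uniqueDiffOn_Icc_zero_one
  have hf1C1 : ContDiffOn ℝ 1 f1 (Set.Icc (0:ℝ) 1) :=
    hf.derivWithin hUD (by norm_num)
  have hf1diff : DifferentiableOn ℝ f1 (Set.Icc (0:ℝ) 1) := hf1C1.differentiableOn one_ne_zero
  have hd : HasDerivWithinAt f1 (derivWithin f1 (Set.Icc (0:ℝ) 1) u₀) (Set.Icc (0:ℝ) 1) u₀ :=
    (hf1diff u₀ hu₀).hasDerivWithinAt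
  have hslope := hasDerivWithinAt_iff_tendsto_slope.mp hd
  have hmono : 𝓝[Set.Ioc u₀ 1] u₀ ≤ 𝓝[Set.Icc (0:ℝ) 1 \ {u₀}] u₀ := by
    apply nhdsWithin_mono
    intro x hx
    exact ⟨⟨le_trans hu₀.1 (le_of_lt hx.1), hx.2⟩, by simp [ne_of_gt hx.1]⟩
  have hslope2 := hslope.mono_left hmono
  have hev : ∀ᶠ x in 𝓝[Set.Ioc u₀ 1] u₀, 0 < slope f1 u₀ x :=
    hslope2.eventually (lt_mem_nhds hcon)
  rw [eventually_nhdsWithin_iff] at hev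
  rcases Metric.eventually_nhds_iff.mp hev with ⟨δ, hδpos, hδ⟩
  set c := min (u₀ + δ/2) ((u₀ + 1)/2) with hcdef
  have hcu₀ : u₀ < c := by
    apply lt_min (by linarith) (by linarith)
  have hc1 : c < 1 := lt_of_le_of_lt (min_le_right _ _) (by linarith)
  have hc0 : 0 < c := lt_of_le_of_lt hu₀.1 hcu₀
  have hf1pos : ∀ x ∈ Set.Ioc u₀ c, 0 < f1 x := by
    intro x hx
    have hx1 : x ∈ Set.Ioc u₀ 1 := ⟨hx.1, le_trans hx.2 (le_of_lt hc1)⟩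
    have hdist : dist x u₀ < δ := by
      rw [Real.dist_eq, abs_of_pos (sub_pos.mpr hx.1)]
      have := hx.2
      have : x ≤ u₀ + δ/2 := le_trans hx.2 (min_le_left _ _)
      linarith
    have := hδ hdist hx1
    rw [slope_def_field, hf1, sub_zero] at this
    have hxpos : 0 < x - u₀ := sub_pos.mpr hx.1
    by_contra hle
    push_neg at hle
    have : f1 x / (x - u₀) ≤ 0 := div_nonpos_iff.mpr (Or.inr ⟨hle, le_of_lt hxpos⟩)
    linarith
  have hmono2 : StrictMonoOn f (Set.Icc u₀ c) := by
    apply strictMonoOn_of_deriv_pos (convex_Icc _ _)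
    · exact hf.continuousOn.mono (Set.Icc_subset_Icc hu₀.1 (le_of_lt hc1))
    · intro x hx
      rw [interior_Icc] at hx
      have hxI : x ∈ Set.Ioo (0:ℝ) 1 :=
        ⟨lt_of_le_of_lt hu₀.1 hx.1, lt_trans hx.2 hc1⟩
      have hnb : Set.Icc (0:ℝ) 1 ∈ 𝓝 x := Icc_mem_nhds hxI.1 hxI.2
      have hdiff : DifferentiableAt ℝ f x :=
        (hf.differentiableOn (by norm_num) x ⟨le_of_lt hxI.1, le_of_lt hxI.2⟩).differentiableAt hnb
      have : deriv f x = f1 x := (derivWithin_of_mem_nhds hnb).symm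
      rw [this]
      exact hf1pos x ⟨hx.1, le_of_lt hx.2⟩
  have h1 : f u₀ < f c := hmono2 (Set.left_mem_Icc.mpr (le_of_lt hcu₀))
    (Set.right_mem_Icc.mpr (le_of_lt hcu₀)) hcu₀
  have h2 : f c ≤ f u₀ := hmax c ⟨le_of_lt hc0, le_of_lt hc1⟩
  linarith

/-- Second derivative test at a max attained at `u₀ = 1` with vanishing first derivative. -/
lemma d2_nonpos_of_max_at_one {f : ℝ → ℝ}
    (hf : ContDiffOn ℝ 2 f (Set.Icc (0:ℝ) 1))
    (hmax : ∀ u ∈ Set.Icc (0:ℝ) 1, f u ≤ f 1)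
    (hf1 : derivWithin f (Set.Icc (0:ℝ) 1) 1 = 0) :
    derivWithin (derivWithin f (Set.Icc (0:ℝ) 1)) (Set.Icc (0:ℝ) 1) 1 ≤ 0 := by
  set f1 := derivWithin f (Set.Icc (0:ℝ) 1) with hf1def
  by_contra hcon
  push_neg at hcon
  have hUD : UniqueDiffOn ℝ (Set.Icc (0:ℝ) 1) := uniqueDiffOn_Icc_zero_one
  have hf1C1 : ContDiffOn ℝ 1 f1 (Set.Icc (0:ℝ) 1) :=
    hf.derivWithin hUD (by norm_num)
  have hf1diff : DifferentiableOn ℝ f1 (Set.Icc (0:ℝ) 1) := hf1C1.differentiableOn one_ne_zero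
  have hd : HasDerivWithinAt f1 (derivWithin f1 (Set.Icc (0:ℝ) 1) 1) (Set.Icc (0:ℝ) 1) 1 :=
    (hf1diff 1 (by norm_num)).hasDerivWithinAt
  have hslope := hasDerivWithinAt_iff_tendsto_slope.mp hd
  have hmono : 𝓝[Set.Ico (0:ℝ) 1] 1 ≤ 𝓝[Set.Icc (0:ℝ) 1 \ {1}] 1 := by
    apply nhdsWithin_mono
    intro x hx
    exact ⟨⟨hx.1, le_of_lt hx.2⟩, by simp [ne_of_lt hx.2]⟩
  have hslope2 := hslope.mono_left hmono
  have hev : ∀ᶠ x in 𝓝[Set.Ico (0:ℝ) 1] 1, 0 < slope f1 1 x :=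
    hslope2.eventually (lt_mem_nhds hcon)
  rw [eventually_nhdsWithin_iff] at hev
  rcases Metric.eventually_nhds_iff.mp hev with ⟨δ, hδpos, hδ⟩
  set c := max (1 - δ/2) (1/2) with hcdef
  have hc1 : c < 1 := by
    apply max_lt (by linarith) (by norm_num)
  have hc0 : 0 < c := lt_of_lt_of_le (by norm_num) (le_max_right _ _)
  have hf1neg : ∀ x ∈ Set.Ico c 1, f1 x < 0 := by
    intro x hx
    have hx1 : x ∈ Set.Ico (0:ℝ) 1 := ⟨le_trans (le_of_lt hc0) hx.1, hx.2⟩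
    have hdist : dist x 1 < δ := by
      rw [Real.dist_eq, abs_of_neg (sub_neg.mpr hx.2)]
      have : 1 - δ/2 ≤ x := le_trans (le_max_left _ _) hx.1
      linarith
    have := hδ hdist hx1
    rw [slope_def_field, hf1, sub_zero] at this
    have hxneg : x - 1 < 0 := sub_neg.mpr hx.2
    by_contra hle
    push_neg at hle
    have : f1 x / (x - 1) ≤ 0 := div_nonpos_iff.mpr (Or.inl ⟨hle, le_of_lt hxneg⟩)
    linarith
  have hmono2 : StrictAntiOn f (Set.Icc c 1) := by
    apply strictAntiOn_of_deriv_neg (convex_Icc _ _)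
    · exact hf.continuousOn.mono (Set.Icc_subset_Icc (le_of_lt hc0) (le_refl 1))
    · intro x hx
      rw [interior_Icc] at hx
      have hxI : x ∈ Set.Ioo (0:ℝ) 1 := ⟨lt_of_lt_of_le hc0 (le_of_lt hx.1), hx.2⟩
      have hnb : Set.Icc (0:ℝ) 1 ∈ 𝓝 x := Icc_mem_nhds hxI.1 hxI.2
      have hdiff : DifferentiableAt ℝ f x :=
        (hf.differentiableOn (by norm_num) x ⟨le_of_lt hxI.1, le_of_lt hxI.2⟩).differentiableAt hnb
      have : deriv f x = f1 x := (derivWithin_of_mem_nhds hnb).symm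
      rw [this]
      exact hf1neg x ⟨le_of_lt hx.1, hx.2⟩
  have h1 : f 1 < f c := hmono2 (Set.left_mem_Icc.mpr (le_of_lt hc1))
    (Set.right_mem_Icc.mpr (le_of_lt hc1)) hc1
  have h2 : f c ≤ f 1 := hmax c ⟨le_of_lt hc0, le_of_lt hc1⟩
  linarith

end

noncomputable section

/-- Parabolic maximum principle with Wentzell/Neumann-type boundary inequalities,
for a strict pointwise subsolution. -/
lemma maxPrinciple {α : ℝ} (hα : 0 < α) (w W : ℝ → ℝ → ℝ) {t₁ t₂ : ℝ} (h12 : t₁ < t₂)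
    (hwcont : ContinuousOn (fun p : ℝ × ℝ => w p.1 p.2) (Set.Icc t₁ t₂ ×ˢ Set.Icc (0:ℝ) 1))
    (hwC2 : ∀ τ ∈ Set.Ioc t₁ t₂, ContDiffOn ℝ 2 (w τ) (Set.Icc (0:ℝ) 1))
    (hwt : ∀ τ ∈ Set.Ioc t₁ t₂, ∀ u ∈ Set.Icc (0:ℝ) 1, HasDerivAt (fun σ => w σ u) (W τ u) τ)
    (hsub : ∀ τ ∈ Set.Ioc t₁ t₂, ∀ u ∈ Set.Icc (0:ℝ) 1,
        W τ u < derivWithin (derivWithin (w τ) (Set.Icc (0:ℝ) 1)) (Set.Icc (0:ℝ) 1) u)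
    (hbc0 : ∀ τ ∈ Set.Ioc t₁ t₂,
        derivWithin (derivWithin (w τ) (Set.Icc (0:ℝ) 1)) (Set.Icc (0:ℝ) 1) 0
          ≤ α * derivWithin (w τ) (Set.Icc (0:ℝ) 1) 0)
    (hbc1 : ∀ τ ∈ Set.Ioc t₁ t₂, derivWithin (w τ) (Set.Icc (0:ℝ) 1) 1 ≤ 0)
    (hinit : ∀ u ∈ Set.Icc (0:ℝ) 1, w t₁ u ≤ 0) :
    ∀ τ ∈ Set.Icc t₁ t₂, ∀ u ∈ Set.Icc (0:ℝ) 1, w τ u ≤ 0 := by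
  set K := Set.Icc t₁ t₂ ×ˢ Set.Icc (0:ℝ) 1 with hKdef
  have hKcomp : IsCompact K := (isCompact_Icc).prod isCompact_Icc
  have hKne : K.Nonempty := ⟨(t₁, 0), ⟨Set.left_mem_Icc.mpr (le_of_lt h12), by norm_num⟩⟩
  obtain ⟨⟨t₀, u₀⟩, hp₀K, hmax⟩ := hKcomp.exists_isMaxOn hKne hwcont
  have hmax' : ∀ τ ∈ Set.Icc t₁ t₂, ∀ u ∈ Set.Icc (0:ℝ) 1, w τ u ≤ w t₀ u₀ := by
    intro τ hτ u hu
    exact hmax (Set.mk_mem_prod hτ hu)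
  have ht₀ : t₀ ∈ Set.Icc t₁ t₂ := hp₀K.1
  have hu₀ : u₀ ∈ Set.Icc (0:ℝ) 1 := hp₀K.2
  have hkey : t₀ = t₁ := by
    by_contra hne
    have ht₀' : t₀ ∈ Set.Ioc t₁ t₂ := ⟨lt_of_le_of_ne ht₀.1 (Ne.symm hne), ht₀.2⟩
    -- time derivative is nonnegative at the max
    have h0 : 0 ≤ W t₀ u₀ := by
      apply deriv_nonneg_of_max_from_left (hwt t₀ ht₀' u₀ hu₀) ht₀'.1
      intro σ hσ
      exact hmax' σ ⟨hσ.1, le_trans hσ.2 ht₀.2⟩ u₀ hu₀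
    -- spatial second derivative is nonpositive at the max
    set f := w t₀ with hfdef
    have hfC2 : ContDiffOn ℝ 2 f (Set.Icc (0:ℝ) 1) := hwC2 t₀ ht₀'
    have hfmax : ∀ u ∈ Set.Icc (0:ℝ) 1, f u ≤ f u₀ := fun u hu => hmax' t₀ ht₀ u hu
    have hfdiff : DifferentiableOn ℝ f (Set.Icc (0:ℝ) 1) :=
      hfC2.differentiableOn (by norm_num)
    have hd2 : derivWithin (derivWithin f (Set.Icc (0:ℝ) 1)) (Set.Icc (0:ℝ) 1) u₀ ≤ 0 := by
      rcases eq_or_lt_of_le hu₀.1 with h0eq | h0lt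
      · -- u₀ = 0
        rw [← h0eq]
        refine le_trans (hbc0 t₀ ht₀') ?_
        have hd1 : derivWithin (w t₀) (Set.Icc (0:ℝ) 1) 0 ≤ 0 := by
          apply deriv_nonpos_left (hfdiff 0 (by norm_num)).hasDerivWithinAt
          intro u hu
          have := hfmax u hu
          rw [← h0eq] at this
          exact this
        nlinarith
      · rcases eq_or_lt_of_le hu₀.2 with h1eq | h1lt
        · -- u₀ = 1
          rw [h1eq]
          apply d2_nonpos_of_max_at_one hfC2
          · intro u hu; rw [← h1eq]; exact hfmax u hu
          · have hge : 0 ≤ derivWithin f (Set.Icc (0:ℝ) 1) 1 := by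
              apply deriv_nonneg_right (hfdiff 1 (by norm_num)).hasDerivWithinAt
              intro u hu
              rw [← h1eq]; exact hfmax u hu
            have hle := hbc1 t₀ ht₀'
            linarith
        · -- interior
          apply d2_nonpos_of_max_lt_one hfC2 hu₀ h1lt hfmax
          have hnb : Set.Icc (0:ℝ) 1 ∈ 𝓝 u₀ := Icc_mem_nhds h0lt h1lt
          rw [derivWithin_of_mem_nhds hnb]
          apply IsLocalMax.deriv_eq_zero
          have : ∀ᶠ u in 𝓝 u₀, f u ≤ f u₀ :=
            eventually_of_mem hnb (fun u hu => hfmax u hu)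
          exact this
    have := hsub t₀ ht₀' u₀ hu₀
    linarith
  intro τ hτ u hu
  calc w τ u ≤ w t₀ u₀ := hmax' τ hτ u hu
    _ = w t₁ u₀ := by rw [hkey]
    _ ≤ 0 := hinit u₀ hu₀

end

noncomputable section

/-- A function with two continuous derivatives provided explicitly is `C²`. -/
lemma contDiff_two_of_derivs (Φ Φ₁ Φ₂ : ℝ → ℝ)
    (h1 : ∀ u, HasDerivAt Φ (Φ₁ u) u) (h2 : ∀ u, HasDerivAt Φ₁ (Φ₂ u) u)
    (hc : Continuous Φ₂) : ContDiff ℝ 2 Φ := by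
  have hd1 : deriv Φ = Φ₁ := funext fun u => (h1 u).deriv
  have hd2 : deriv Φ₁ = Φ₂ := funext fun u => (h2 u).deriv
  have h21 : (2 : WithTop ℕ∞) = 1 + 1 := by norm_num
  rw [h21, contDiff_succ_iff_deriv]
  refine ⟨fun u => (h1 u).differentiableAt, ?_, ?_⟩
  · intro h; simp at h
  rw [hd1]
  have h10 : (1 : WithTop ℕ∞) = 0 + 1 := by norm_num
  rw [h10, contDiff_succ_iff_deriv]
  refine ⟨fun u => (h2 u).differentiableAt, ?_, ?_⟩
  · intro h; simp at h
  rw [hd2, contDiff_zero]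
  exact hc

/-- Existence of a smooth profile `Φ` close to (and above) a given continuous `G` on `[0,1]`,
satisfying the compatibility conditions `Φ''(0) = α Φ'(0)` and `Φ'(1) = 0`. -/
lemma exists_Phi {α δ : ℝ} (hα : 0 < α) (hδ : 0 < δ) (G : ℝ → ℝ)
    (hG : ContinuousOn G (Set.Icc (0:ℝ) 1)) :
    ∃ Φ Φ₁ Φ₂ : ℝ → ℝ,
      (∀ u, HasDerivAt Φ (Φ₁ u) u) ∧ (∀ u, HasDerivAt Φ₁ (Φ₂ u) u) ∧
      ContDiff ℝ 2 Φ ∧ Continuous Φ₂ ∧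
      (∀ u ∈ Set.Icc (0:ℝ) 1, G u + δ ≤ Φ u ∧ Φ u ≤ G u + 3*δ) ∧
      Φ₂ 0 = α * Φ₁ 0 ∧ Φ₁ 1 = 0 := by
  obtain ⟨p, hp⟩ := exists_polynomial_near_of_continuousOn 0 1 G hG (δ/2) (by positivity)
  set ℓ₁ : ℝ := p.derivative.derivative.eval 0 - α * p.derivative.eval 0 with hℓ₁
  set ℓ₂ : ℝ := p.derivative.eval 1 with hℓ₂
  obtain ⟨n, hn⟩ := exists_nat_ge (4 * |ℓ₁| / δ)
  obtain ⟨m, hm⟩ := exists_nat_ge (4 * |ℓ₂| / δ)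
  set a : ℝ := ℓ₁ / (2 * (n + 2) + α) with ha
  set b : ℝ := -ℓ₂ with hb
  have hden : (0:ℝ) < 2 * ((n:ℝ) + 2) + α := by positivity
  have habound : |a| ≤ δ / 4 := by
    rw [ha, abs_div, abs_of_pos hden, div_le_iff₀ hden]
    have h1 : 4 * |ℓ₁| ≤ δ * n := by
      rw [div_le_iff₀ hδ] at hn
      linarith
    nlinarith [abs_nonneg ℓ₁]
  have hbbound : |b| ≤ δ / 4 * ((m:ℝ) + 3) := by
    have h1 : 4 * |ℓ₂| ≤ δ * m := by
      rw [div_le_iff₀ hδ] at hm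
      linarith
    rw [hb, abs_neg]
    nlinarith [abs_nonneg ℓ₂]
  set s : ℝ → ℝ := fun u => u * (1 - u)^(n+2) with hs
  set s₁ : ℝ → ℝ := fun u => (1 - u)^(n+2) - (n+2) * u * (1 - u)^(n+1) with hs₁
  set s₂ : ℝ → ℝ := fun u =>
    -(2*((n:ℝ)+2)) * (1 - u)^(n+1) + (n+2) * (n+1) * u * (1 - u)^n with hs₂
  set r : ℝ → ℝ := fun u => u^(m+3) / (m+3) with hr
  set r₁ : ℝ → ℝ := fun u => u^(m+2) with hr₁
  set r₂ : ℝ → ℝ := fun u => ((m:ℝ)+2) * u^(m+1) with hr₂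
  have hone : ∀ u : ℝ, HasDerivAt (fun v => (1:ℝ) - v) (-1) u := by
    intro u
    simpa using (hasDerivAt_const u (1:ℝ)).fun_sub (hasDerivAt_id u)
  have hpow1 : ∀ (u : ℝ) (k : ℕ), HasDerivAt (fun v => (1 - v)^(k+1)) (-(((k:ℝ)+1) * (1-u)^k)) u := by
    intro u k
    have := (hone u).fun_pow (k+1)
    simp only [Nat.add_sub_cancel] at this
    refine this.congr_deriv ?_
    push_cast
    ring
  have hsd : ∀ u, HasDerivAt s (s₁ u) u := by
    intro u
    have h2 := (hasDerivAt_id u).fun_mul (hpow1 u (n+1))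
    simp only [id_eq] at h2
    simp only [hs, hs₁]
    refine h2.congr_deriv ?_
    push_cast
    ring
  have hsd₁ : ∀ u, HasDerivAt s₁ (s₂ u) u := by
    intro u
    have h2 : HasDerivAt (fun v => ((n:ℝ)+2) * v * (1 - v)^(n+1))
        (((n:ℝ)+2) * (1-u)^(n+1) + ((n:ℝ)+2) * u * (-(((n:ℝ)+1) * (1-u)^n))) u := by
      have := ((hasDerivAt_id u).const_mul ((n:ℝ)+2)).fun_mul (hpow1 u n)
      simp only [id_eq] at this
      refine this.congr_deriv ?_
      ring
    have h3 := (hpow1 u (n+1)).fun_sub h2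
    simp only [hs₁, hs₂]
    refine h3.congr_deriv ?_
    push_cast
    ring
  have hrd : ∀ u, HasDerivAt r (r₁ u) u := by
    intro u
    have h4 := (hasDerivAt_pow (m+3) u).div_const ((m:ℝ)+3)
    rw [show m + 3 - 1 = m + 2 by omega] at h4
    simp only [hr, hr₁]
    refine h4.congr_deriv ?_
    have h3 : ((m:ℝ) + 3) ≠ 0 := by positivity
    field_simp
    try push_cast
    try ring
  have hrd₁ : ∀ u, HasDerivAt r₁ (r₂ u) u := by
    intro u
    have h4 := hasDerivAt_pow (m+2) u
    rw [show m + 2 - 1 = m + 1 by omega] at h4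
    simp only [hr₁, hr₂]
    refine h4.congr_deriv ?_
    push_cast
    ring
  have hscont : Continuous s₂ := by
    apply Continuous.add
    · exact continuous_const.mul ((continuous_const.sub continuous_id).pow _)
    · exact (continuous_const.mul continuous_id).mul ((continuous_const.sub continuous_id).pow _)
  have hrcont : Continuous r₂ := continuous_const.mul (continuous_pow _)
  have hΦ₂cont : Continuous (fun u => p.derivative.derivative.eval u + a * s₂ u + b * r₂ u) :=
    ((p.derivative.derivative.continuous.add (continuous_const.mul hscont)).add
      (continuous_const.mul hrcont))
  have hΦd : ∀ u, HasDerivAt (fun v => p.eval v + 2*δ + a * s v + b * r v)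
      (p.derivative.eval u + a * s₁ u + b * r₁ u) u := by
    intro u
    exact (((p.hasDerivAt u).add_const _).add ((hsd u).const_mul a)).add ((hrd u).const_mul b)
  have hΦd₁ : ∀ u, HasDerivAt (fun v => p.derivative.eval v + a * s₁ v + b * r₁ v)
      (p.derivative.derivative.eval u + a * s₂ u + b * r₂ u) u := by
    intro u
    exact ((p.derivative.hasDerivAt u).add ((hsd₁ u).const_mul a)).add ((hrd₁ u).const_mul b)
  refine ⟨fun u => p.eval u + 2*δ + a * s u + b * r u,
          fun u => p.derivative.eval u + a * s₁ u + b * r₁ u,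
          fun u => p.derivative.derivative.eval u + a * s₂ u + b * r₂ u,
          hΦd, hΦd₁, ?_, hΦ₂cont, ?_, ?_, ?_⟩
  · exact contDiff_two_of_derivs _ _ _ hΦd hΦd₁ hΦ₂cont
  · -- bounds
    intro u hu
    dsimp only
    have hu0 : (0:ℝ) ≤ u := hu.1
    have hu1 : u ≤ 1 := hu.2
    have h1u : (0:ℝ) ≤ 1 - u := by linarith
    have h1u1 : 1 - u ≤ 1 := by linarith
    have hsb : |s u| ≤ 1 := by
      rw [hs, abs_of_nonneg (by positivity)]
      calc u * (1-u)^(n+2) ≤ 1 * 1 := by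
            apply mul_le_mul hu1 (pow_le_one₀ h1u h1u1) (by positivity) (by norm_num)
        _ = 1 := by norm_num
    have hrb : |r u| ≤ 1 / ((m:ℝ)+3) := by
      rw [hr, abs_div, abs_of_nonneg (by positivity : (0:ℝ) ≤ (m:ℝ)+3)]
      gcongr
      rw [abs_of_nonneg (by positivity)]
      exact pow_le_one₀ hu0 hu1
    have has : |a * s u| ≤ δ/4 := by
      rw [abs_mul]
      calc |a| * |s u| ≤ (δ/4) * 1 := mul_le_mul habound hsb (abs_nonneg _) (by positivity)
        _ = δ/4 := by ring
    have hbs : |b * r u| ≤ δ/4 := by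
      rw [abs_mul]
      calc |b| * |r u| ≤ (δ/4 * ((m:ℝ)+3)) * (1/((m:ℝ)+3)) :=
            mul_le_mul hbbound hrb (abs_nonneg _) (by positivity)
        _ = δ/4 := by field_simp
    have hpu := hp u hu
    have h1 := abs_le.mp has
    have h2 := abs_le.mp hbs
    have h3 := abs_lt.mp hpu
    clear_value a b s r
    constructor
    · linarith [h1.1, h2.1, h3.1]
    · linarith [h1.2, h2.2, h3.2]
  · -- Φ₂ 0 = α * Φ₁ 0
    dsimp only
    have e1 : s₂ 0 = -(2*((n:ℝ)+2)) := by simp [hs₂]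
    have e2 : r₂ 0 = 0 := by simp [hr₂, zero_pow (Nat.succ_ne_zero m)]
    have e3 : s₁ 0 = 1 := by simp [hs₁]
    have e4 : r₁ 0 = 0 := by simp [hr₁, zero_pow (by omega : m + 2 ≠ 0)]
    rw [e1, e2, e3, e4]
    have : a * (2 * ((n:ℝ) + 2) + α) = ℓ₁ := by
      rw [ha]
      field_simp
    rw [hℓ₁] at this
    ring_nf
    ring_nf at this
    linarith
  · -- Φ₁ 1 = 0
    dsimp only
    have e1 : s₁ 1 = 0 := by
      simp [hs₁, zero_pow (by omega : n + 2 ≠ 0), zero_pow (by omega : n + 1 ≠ 0)]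
    have e2 : r₁ 1 = 1 := by simp [hr₁]
    rw [e1, e2, hb, hℓ₂]
    ring

end

noncomputable section

/-- FTC for the second spatial derivative of a `C²` function on `[0,1]`. -/
lemma integral_d2 {g : ℝ → ℝ} (hg : ContDiffOn ℝ 2 g (Set.Icc (0:ℝ) 1)) :
    ∫ u in (0:ℝ)..1, derivWithin (derivWithin g (Set.Icc 0 1)) (Set.Icc 0 1) u
      = derivWithin g (Set.Icc 0 1) 1 - derivWithin g (Set.Icc 0 1) 0 := by
  have hUD : UniqueDiffOn ℝ (Set.Icc (0:ℝ) 1) := uniqueDiffOn_Icc_zero_one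
  have hg1 : ContDiffOn ℝ 1 (derivWithin g (Set.Icc (0:ℝ) 1)) (Set.Icc (0:ℝ) 1) :=
    hg.derivWithin hUD (by norm_num)
  apply intervalIntegral.integral_eq_sub_of_hasDeriv_right_of_le (by norm_num)
  · exact hg1.continuousOn
  · intro x hx
    have hmem : Set.Icc (0:ℝ) 1 ∈ 𝓝 x := Icc_mem_nhds hx.1 hx.2
    have hdiff : DifferentiableAt ℝ (derivWithin g (Set.Icc (0:ℝ) 1)) x :=
      ((hg1.differentiableOn one_ne_zero) x ⟨le_of_lt hx.1, le_of_lt hx.2⟩).differentiableAt hmem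
    have h1 := hdiff.hasDerivAt
    rw [← derivWithin_of_mem_nhds hmem] at h1
    exact h1.hasDerivWithinAt
  · have : ContinuousOn (derivWithin (derivWithin g (Set.Icc (0:ℝ) 1)) (Set.Icc (0:ℝ) 1))
        (Set.Icc (0:ℝ) 1) := hg1.continuousOn_derivWithin hUD le_rfl
    apply ContinuousOn.intervalIntegrable
    rwa [Set.uIcc_of_le (by norm_num : (0:ℝ) ≤ 1)]

/-- Continuity (on `[0,T]`) of the mass functional. -/
lemma contMass {T α : ℝ} (hα : 0 < α) (ρ : ℝ → ℝ → ℝ)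
    (hcont : ContinuousOn (fun p : ℝ × ℝ => ρ p.1 p.2) (Set.Icc 0 T ×ˢ Set.Icc 0 1)) :
    ContinuousOn (fun τ => ρ τ 0 / α + ∫ u in (0:ℝ)..1, ρ τ u) (Set.Icc 0 T) := by
  have hK : IsCompact (Set.Icc (0:ℝ) T ×ˢ Set.Icc (0:ℝ) 1) := isCompact_Icc.prod isCompact_Icc
  have hUC := hK.uniformContinuousOn_of_continuous hcont
  rw [Metric.uniformContinuousOn_iff] at hUC
  have hslice : ∀ τ ∈ Set.Icc (0:ℝ) T, ContinuousOn (ρ τ) (Set.Icc (0:ℝ) 1) := by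
    intro τ hτ
    have : ContinuousOn (fun u => ρ τ u) (Set.Icc (0:ℝ) 1) := by
      apply hcont.comp (Continuous.continuousOn (continuous_const.prodMk continuous_id))
      intro u hu
      exact ⟨hτ, hu⟩
    exact this
  rw [Metric.continuousOn_iff]
  intro τ hτ ε hε
  have hα1 : (0:ℝ) < 1/α + 1 := by positivity
  set ε' := ε / (2 * (1/α + 1)) with hε'def
  have hε' : 0 < ε' := by positivity
  obtain ⟨δ, hδpos, hδ⟩ := hUC ε' hε'
  refine ⟨δ, hδpos, ?_⟩
  intro τ' hτ' hdist
  have hd : ∀ u ∈ Set.Icc (0:ℝ) 1, dist (ρ τ' u) (ρ τ u) < ε' := by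
    intro u hu
    have := hδ (τ', u) ⟨hτ', hu⟩ (τ, u) ⟨hτ, hu⟩ (by
      rw [Prod.dist_eq]
      simp only [dist_self]
      rw [max_eq_left dist_nonneg]
      exact hdist)
    exact this
  have hint' : IntervalIntegrable (ρ τ') MeasureTheory.volume 0 1 := by
    apply ContinuousOn.intervalIntegrable
    rw [Set.uIcc_of_le (by norm_num : (0:ℝ) ≤ 1)]
    exact hslice τ' hτ'
  have hint : IntervalIntegrable (ρ τ) MeasureTheory.volume 0 1 := by
    apply ContinuousOn.intervalIntegrable
    rw [Set.uIcc_of_le (by norm_num : (0:ℝ) ≤ 1)]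
    exact hslice τ hτ
  have hIbound : |(∫ u in (0:ℝ)..1, ρ τ' u) - ∫ u in (0:ℝ)..1, ρ τ u| ≤ ε' := by
    rw [← intervalIntegral.integral_sub hint' hint]
    have := intervalIntegral.norm_integral_le_of_norm_le_const
      (C := ε') (f := fun u => ρ τ' u - ρ τ u) (a := (0:ℝ)) (b := 1) ?_
    · simpa using this
    · intro x hx
      rw [Set.uIoc_of_le (by norm_num : (0:ℝ) ≤ 1)] at hx
      have := hd x ⟨le_of_lt hx.1, hx.2⟩
      rw [Real.dist_eq] at this
      simpa [Real.norm_eq_abs] using le_of_lt this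
  have h0bound : |ρ τ' 0 - ρ τ 0| < ε' := by
    have := hd 0 (by norm_num)
    rwa [Real.dist_eq] at this
  rw [Real.dist_eq]
  have hαpos : (0:ℝ) < α := hα
  have key : |(ρ τ' 0 / α + ∫ u in (0:ℝ)..1, ρ τ' u) - (ρ τ 0 / α + ∫ u in (0:ℝ)..1, ρ τ u)|
      ≤ |ρ τ' 0 - ρ τ 0| / α + |(∫ u in (0:ℝ)..1, ρ τ' u) - ∫ u in (0:ℝ)..1, ρ τ u| := by
    have h1 : (ρ τ' 0 / α + ∫ u in (0:ℝ)..1, ρ τ' u) - (ρ τ 0 / α + ∫ u in (0:ℝ)..1, ρ τ u)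
        = (ρ τ' 0 - ρ τ 0)/α + ((∫ u in (0:ℝ)..1, ρ τ' u) - ∫ u in (0:ℝ)..1, ρ τ u) := by
      ring
    rw [h1]
    refine le_trans (abs_add_le _ _) ?_
    rw [abs_div, abs_of_pos hαpos]
  have hεsum : ε' / α + ε' < ε := by
    rw [hε'def]
    have : ε / (2 * (1/α + 1)) / α + ε / (2 * (1/α + 1)) = ε / 2 * ((1/α + 1) / (1/α + 1)) := by
      field_simp
    rw [this, div_self (ne_of_gt hα1)]
    linarith
  calc |(ρ τ' 0 / α + ∫ u in (0:ℝ)..1, ρ τ' u) - (ρ τ 0 / α + ∫ u in (0:ℝ)..1, ρ τ u)|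
      ≤ |ρ τ' 0 - ρ τ 0| / α + |(∫ u in (0:ℝ)..1, ρ τ' u) - ∫ u in (0:ℝ)..1, ρ τ u| := key
    _ < ε' / α + ε' := by
        apply add_lt_add_of_lt_of_le
        · exact (div_lt_div_of_pos_right h0bound hα)

        · exact hIbound
    _ < ε := hεsum

end

noncomputable section

set_option maxHeartbeats 1600000 in
/-- One-step estimate: starting from any time `τ₀`, the mass functional grows at rate
at most `ε₀` over a short time interval. -/
lemma one_step {T α : ℝ} (hT : 0 < T) (hα : 0 < α) (ρ : ℝ → ℝ → ℝ)
    (hcont : ContinuousOn (fun p : ℝ × ℝ => ρ p.1 p.2) (Set.Icc 0 T ×ˢ Set.Icc 0 1))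
    (hspace : ∀ t ∈ Set.Ioc 0 T, ContDiffOn ℝ 2 (ρ t) (Set.Icc (0:ℝ) 1))
    (hheat : ∀ t ∈ Set.Ioc 0 T, ∀ u ∈ Set.Icc (0:ℝ) 1,
      HasDerivAt (fun s => ρ s u)
        (derivWithin (derivWithin (ρ t) (Set.Icc (0:ℝ) 1)) (Set.Icc (0:ℝ) 1) u) t)
    (hwentzell : ∀ t ∈ Set.Ioc 0 T,
      derivWithin (derivWithin (ρ t) (Set.Icc (0:ℝ) 1)) (Set.Icc (0:ℝ) 1) 0
        = α * derivWithin (ρ t) (Set.Icc (0:ℝ) 1) 0)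
    (hneu : ∀ t ∈ Set.Ioc 0 T, derivWithin (ρ t) (Set.Icc (0:ℝ) 1) 1 = 0)
    {τ₀ t : ℝ} (hτ₀ : τ₀ ∈ Set.Ioc 0 T) (ht : t ∈ Set.Ioc 0 T) (hτ₀t : τ₀ < t)
    {ε₀ : ℝ} (hε₀ : 0 < ε₀) :
    ∃ Δ, 0 < Δ ∧ ∀ τ' ∈ Set.Ioc τ₀ (min (τ₀ + Δ) t),
      ρ τ' 0 / α + (∫ u in (0:ℝ)..1, ρ τ' u)
        ≤ ρ τ₀ 0 / α + (∫ u in (0:ℝ)..1, ρ τ₀ u) + ε₀ * (τ' - τ₀) := by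
  have hUD : UniqueDiffOn ℝ (Set.Icc (0:ℝ) 1) := uniqueDiffOn_Icc_zero_one
  set I := Set.Icc (0:ℝ) 1 with hIdef
  have hmem0 : (0:ℝ) ∈ I := ⟨le_refl 0, by norm_num⟩
  have hmem1 : (1:ℝ) ∈ I := ⟨by norm_num, le_refl 1⟩
  set g : ℝ → ℝ := ρ τ₀ with hgdef
  have hg : ContDiffOn ℝ 2 g I := hspace τ₀ hτ₀
  have hg1C1 : ContDiffOn ℝ 1 (derivWithin g I) I := hg.derivWithin hUD (by norm_num)
  set G : ℝ → ℝ := derivWithin (derivWithin g I) I with hGdef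
  have hGcont : ContinuousOn G I := hg1C1.continuousOn_derivWithin hUD le_rfl
  have hα1 : (0:ℝ) < 1/α + 1 := by positivity
  set δ : ℝ := ε₀ / (8 * (1/α + 1)) with hδdef
  have hδ : 0 < δ := by positivity
  obtain ⟨Φ, Φ₁, Φ₂, hΦd, hΦd₁, hΦC2, hΦ₂cont, hΦbounds, hΦcompat, hΦneu⟩ :=
    exists_Phi hα hδ G hGcont
  obtain ⟨C, hC⟩ := (isCompact_Icc (a := (0:ℝ)) (b := 1)).exists_bound_of_continuousOn
    hΦ₂cont.continuousOn
  have hC0 : 0 ≤ C := le_trans (norm_nonneg _) (hC 0 (by norm_num))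
  -- record the needed property of δ, then make it opaque
  have hδ38 : 3*δ*(1/α + 1) = 3*ε₀/8 := by
    rw [hδdef]; field_simp
  clear_value δ
  -- the auxiliary convex profile ψ
  set ψ : ℝ → ℝ := fun u => 2*u^2 - 2*u + 1 with hψdef
  set ψ₁ : ℝ → ℝ := fun u => 4*u - 2 with hψ₁def
  set ψ₂ : ℝ → ℝ := fun _ => (4:ℝ) with hψ₂def
  have hψd : ∀ u, HasDerivAt ψ (ψ₁ u) u := by
    intro u
    have h1 := (((hasDerivAt_pow 2 u).const_mul 2).fun_sub
      ((hasDerivAt_id u).const_mul 2)).add_const 1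
    simp only [id_eq] at h1
    simp only [hψdef, hψ₁def]
    refine h1.congr_deriv ?_
    norm_num
    ring
  have hψd₁ : ∀ u, HasDerivAt ψ₁ (ψ₂ u) u := by
    intro u
    have h1 := ((hasDerivAt_id u).const_mul 4).sub_const 2
    simp only [id_eq] at h1
    simp only [hψ₁def, hψ₂def]
    refine h1.congr_deriv ?_
    norm_num
  have hψC2 : ContDiff ℝ 2 ψ := contDiff_two_of_derivs ψ ψ₁ ψ₂ hψd hψd₁ continuous_const
  have hψnonneg : ∀ u : ℝ, 0 ≤ ψ u := by
    intro u
    simp only [hψdef]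
    nlinarith [sq_nonneg (u - 1/2)]
  have hψ0 : ψ 0 = 1 := by norm_num [hψdef]
  have hψ₁0 : ψ₁ 0 = -2 := by norm_num [hψ₁def]
  have hψ₁1 : ψ₁ 1 = 2 := by norm_num [hψ₁def]
  have hψ₂v : ∀ u : ℝ, ψ₂ u = 4 := fun _ => rfl
  have hψint : (∫ u in (0:ℝ)..1, ψ u) = 2/3 := by
    have hA : ∀ x ∈ Set.uIcc (0:ℝ) 1, HasDerivAt (fun v : ℝ => 2/3*v^3 - v^2 + v) (ψ x) x := by
      intro x _
      have h1 := (((hasDerivAt_pow 3 x).const_mul (2/3)).fun_sub (hasDerivAt_pow 2 x)).fun_add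
        (hasDerivAt_id x)
      simp only [id_eq] at h1
      simp only [hψdef]
      refine h1.congr_deriv ?_
      norm_num
      ring
    have hInt : IntervalIntegrable ψ MeasureTheory.volume 0 1 := by
      apply Continuous.intervalIntegrable
      exact hψC2.continuous
    rw [intervalIntegral.integral_eq_sub_of_hasDerivAt hA hInt]
    norm_num
  have hψcont : Continuous ψ := hψC2.continuous
  clear_value ψ ψ₁ ψ₂
  set Mψ : ℝ := 1/α + 2/3 with hMψdef
  have hMψ : 0 < Mψ := by positivity
  clear_value Mψ
  -- the step size
  set Δ : ℝ := min (δ/(4*(C+1))) (δ * Mψ/(8*ε₀)) with hΔdef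
  have hΔpos : 0 < Δ := by
    apply lt_min (by positivity) (by positivity)
  have hΔ1 : Δ ≤ δ/(4*(C+1)) := min_le_left _ _
  have hΔ2 : Δ ≤ δ * Mψ/(8*ε₀) := min_le_right _ _
  clear_value Δ
  refine ⟨Δ, hΔpos, ?_⟩
  intro τ' hτ'
  have hτ'1 : τ₀ < τ' := hτ'.1
  have hτ'2 : τ' ≤ τ₀ + Δ := le_trans hτ'.2 (min_le_left _ _)
  have hτ'3 : τ' ≤ t := le_trans hτ'.2 (min_le_right _ _)
  have hτ'T : τ' ∈ Set.Ioc 0 T := ⟨lt_trans hτ₀.1 hτ'1, le_trans hτ'3 ht.2⟩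
  set ε : ℝ := ε₀ * (τ' - τ₀) / (2 * Mψ) with hεdef
  have hεpos : 0 < ε := by
    apply div_pos (by nlinarith) (by positivity)
  have hε16 : ε ≤ δ/16 := by
    rw [hεdef, div_le_div_iff₀ (by positivity) (by norm_num)]
    have h1 : τ' - τ₀ ≤ δ * Mψ/(8*ε₀) := by linarith
    have h2 : ε₀ * (τ' - τ₀) ≤ ε₀ * (δ * Mψ/(8*ε₀)) :=
      mul_le_mul_of_nonneg_left h1 (le_of_lt hε₀)
    have h3 : ε₀ * (δ * Mψ/(8*ε₀)) = δ * Mψ / 8 := by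
      field_simp
    rw [h3] at h2
    linarith
  have hεMass : ε * (2 * Mψ) = ε₀ * (τ' - τ₀) := by
    rw [hεdef]
    field_simp
  clear_value ε
  -- the comparison function V and difference w
  set V : ℝ → ℝ → ℝ := fun τ u => g u + (τ - τ₀) * Φ u + ε * ψ u with hVdef
  set w : ℝ → ℝ → ℝ := fun τ u => ρ τ u - V τ u with hwdef
  -- spatial derivatives of V
  have hVd1 : ∀ τ : ℝ, ∀ u ∈ I, HasDerivWithinAt (V τ)
      (derivWithin g I u + (τ - τ₀) * Φ₁ u + ε * ψ₁ u) I u := by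
    intro τ u hu
    apply HasDerivWithinAt.add
    apply HasDerivWithinAt.add
    · exact ((hg.differentiableOn (by norm_num)) u hu).hasDerivWithinAt
    · exact ((hΦd u).const_mul (τ - τ₀)).hasDerivWithinAt
    · exact ((hψd u).const_mul ε).hasDerivWithinAt
  have hVder1 : ∀ τ : ℝ, ∀ u ∈ I, derivWithin (V τ) I u
      = derivWithin g I u + (τ - τ₀) * Φ₁ u + ε * ψ₁ u := by
    intro τ u hu
    exact (hVd1 τ u hu).derivWithin (hUD u hu)
  -- for τ ∈ (τ₀, τ'] spatial derivatives of w τ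
  have hρmem : ∀ τ ∈ Set.Ioc τ₀ τ', τ ∈ Set.Ioc 0 T := by
    intro τ hτ
    exact ⟨lt_trans hτ₀.1 hτ.1, le_trans hτ.2 (le_trans hτ'3 ht.2)⟩
  have hwd1 : ∀ τ ∈ Set.Ioc τ₀ τ', ∀ u ∈ I, derivWithin (w τ) I u
      = derivWithin (ρ τ) I u
        - (derivWithin g I u + (τ - τ₀) * Φ₁ u + ε * ψ₁ u) := by
    intro τ hτ u hu
    have h1 : HasDerivWithinAt (w τ)
        (derivWithin (ρ τ) I u - (derivWithin g I u + (τ - τ₀) * Φ₁ u + ε * ψ₁ u)) I u := by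
      apply HasDerivWithinAt.sub
      · exact (((hspace τ (hρmem τ hτ)).differentiableOn (by norm_num)) u hu).hasDerivWithinAt
      · exact hVd1 τ u hu
    exact h1.derivWithin (hUD u hu)
  have hwd2 : ∀ τ ∈ Set.Ioc τ₀ τ', ∀ u ∈ I,
      derivWithin (derivWithin (w τ) I) I u
      = derivWithin (derivWithin (ρ τ) I) I u
        - (G u + (τ - τ₀) * Φ₂ u + ε * ψ₂ u) := by
    intro τ hτ u hu
    have hcongr : derivWithin (derivWithin (w τ) I) I u
        = derivWithin (fun v => derivWithin (ρ τ) I v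
            - (derivWithin g I v + (τ - τ₀) * Φ₁ v + ε * ψ₁ v)) I u := by
      apply derivWithin_congr
      · intro v hv; exact hwd1 τ hτ v hv
      · exact hwd1 τ hτ u hu
    rw [hcongr]
    have hρ1C1 : ContDiffOn ℝ 1 (derivWithin (ρ τ) I) I :=
      (hspace τ (hρmem τ hτ)).derivWithin hUD (by norm_num)
    have h2 : HasDerivWithinAt (fun v => derivWithin (ρ τ) I v
        - (derivWithin g I v + (τ - τ₀) * Φ₁ v + ε * ψ₁ v))
        (derivWithin (derivWithin (ρ τ) I) I u
          - (G u + (τ - τ₀) * Φ₂ u + ε * ψ₂ u)) I u := by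
      apply HasDerivWithinAt.sub
      · exact ((hρ1C1.differentiableOn one_ne_zero) u hu).hasDerivWithinAt
      · apply HasDerivWithinAt.add
        apply HasDerivWithinAt.add
        · exact ((hg1C1.differentiableOn one_ne_zero) u hu).hasDerivWithinAt
        · exact ((hΦd₁ u).const_mul (τ - τ₀)).hasDerivWithinAt
        · exact ((hψd₁ u).const_mul ε).hasDerivWithinAt
    exact h2.derivWithin (hUD u hu)
  -- apply the maximum principle
  have hcomp : ∀ τ ∈ Set.Icc τ₀ τ', ∀ u ∈ I, w τ u ≤ 0 := by
    apply maxPrinciple hα w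
      (fun τ u => derivWithin (derivWithin (ρ τ) I) I u - Φ u) hτ'1
    · -- continuity
      apply ContinuousOn.sub
      · apply hcont.mono
        apply Set.prod_mono_left
        exact Set.Icc_subset_Icc (le_of_lt hτ₀.1) (le_trans hτ'3 ht.2)
      · apply ContinuousOn.add
        apply ContinuousOn.add
        · exact hg.continuousOn.comp continuous_snd.continuousOn (fun p hp => hp.2)
        · exact (((continuous_fst.sub continuous_const).mul
            (hΦC2.continuous.comp continuous_snd)).continuousOn)
        · exact (continuous_const.mul (hψC2.continuous.comp continuous_snd)).continuousOn
    · -- C²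
      intro τ hτ
      apply ContDiffOn.sub (hspace τ (hρmem τ hτ))
      apply ContDiffOn.add
      apply ContDiffOn.add
      · exact hg
      · exact (contDiff_const.mul hΦC2).contDiffOn
      · exact (contDiff_const.mul hψC2).contDiffOn
    · -- time derivative
      intro τ hτ u hu
      have h1 := hheat τ (hρmem τ hτ) u hu
      have h2 : HasDerivAt (fun σ => V σ u) (Φ u) τ := by
        have h3 : HasDerivAt (fun σ : ℝ => g u + (σ - τ₀) * Φ u + ε * ψ u) (1 * Φ u) τ := by
          exact ((((hasDerivAt_id τ).sub_const τ₀).mul_const (Φ u)).const_add (g u)).add_const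
            (ε * ψ u)
        simpa [hVdef] using h3
      exact h1.sub h2
    · -- strict subsolution
      intro τ hτ u hu
      rw [hwd2 τ hτ u hu]
      have h1 : G u + δ ≤ Φ u := (hΦbounds u hu).1
      have h2 : (τ - τ₀) * Φ₂ u ≤ δ/4 := by
        have hb1 : |Φ₂ u| ≤ C := by
          have := hC u hu
          rwa [Real.norm_eq_abs] at this
        have hτb : 0 ≤ τ - τ₀ := by
          have := hτ.1
          linarith
        have hτb2 : τ - τ₀ ≤ Δ := by
          have h3 := hτ.2
          linarith
        have hΔb : Δ ≤ δ/(4*(C+1)) := hΔ1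
        calc (τ - τ₀) * Φ₂ u ≤ (τ - τ₀) * C := by
              apply mul_le_mul_of_nonneg_left (le_trans (le_abs_self _) hb1) hτb
          _ ≤ (δ/(4*(C+1))) * C := by
              apply mul_le_mul_of_nonneg_right (le_trans hτb2 hΔb) hC0
          _ ≤ δ/4 := by
              rw [div_mul_eq_mul_div, div_le_div_iff₀ (by positivity) (by norm_num)]
              nlinarith
      have h3 : ε * ψ₂ u ≤ δ/4 := by
        rw [hψ₂v u]
        linarith
      have hsum : G u + (τ - τ₀) * Φ₂ u + ε * ψ₂ u < Φ u := by linarith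
      linarith
    · -- Wentzell boundary inequality
      intro τ hτ
      rw [hwd2 τ hτ 0 hmem0, hwd1 τ hτ 0 hmem0]
      have h1 := hwentzell τ (hρmem τ hτ)
      have h2 := hwentzell τ₀ hτ₀
      have h3 : G 0 = α * derivWithin g I 0 := h2
      have h4 : Φ₂ 0 = α * Φ₁ 0 := hΦcompat
      have h5 : ψ₂ 0 = 4 := hψ₂v 0
      rw [h1, h3, h4, h5, hψ₁0]
      nlinarith [mul_pos hα hεpos]
    · -- Neumann boundary inequality
      intro τ hτ
      rw [hwd1 τ hτ 1 hmem1]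
      have h1 := hneu τ (hρmem τ hτ)
      have h2 := hneu τ₀ hτ₀
      rw [h1, h2, hΦneu, hψ₁1]
      linarith [hεpos]
    · -- initial condition
      intro u hu
      simp only [hwdef, hVdef, hgdef]
      have : ρ τ₀ u - (ρ τ₀ u + (τ₀ - τ₀) * Φ u + ε * ψ u) = - (ε * ψ u) := by ring
      rw [this]
      have := hψnonneg u
      nlinarith [hεpos]
  -- conclusion: the mass of ρ at time τ' is below the mass of V at time τ'
  have hVle : ∀ u ∈ I, ρ τ' u ≤ V τ' u := by
    intro u hu
    have := hcomp τ' ⟨le_of_lt hτ'1, le_refl τ'⟩ u hu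
    simp only [hwdef] at this
    linarith
  have hii : ∀ {f : ℝ → ℝ}, ContinuousOn f I → IntervalIntegrable f MeasureTheory.volume 0 1 := by
    intro f hf
    apply ContinuousOn.intervalIntegrable
    rw [Set.uIcc_of_le (by norm_num : (0:ℝ) ≤ 1)]
    rwa [hIdef] at hf
  have hρτ'cont : ContinuousOn (ρ τ') I := (hspace τ' hτ'T).continuousOn
  have hgcont : ContinuousOn g I := hg.continuousOn
  have hΦcont : Continuous Φ := hΦC2.continuous
  have hicΦ : IntervalIntegrable (fun u => (τ' - τ₀) * Φ u) MeasureTheory.volume 0 1 :=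
    (continuous_const.mul hΦcont).intervalIntegrable _ _
  have hicψ : IntervalIntegrable (fun u => ε * ψ u) MeasureTheory.volume 0 1 :=
    (continuous_const.mul hψcont).intervalIntegrable _ _
  have hVcont : ContinuousOn (V τ') I := by
    apply ContinuousOn.add
    apply ContinuousOn.add
    · exact hgcont
    · exact (continuous_const.mul hΦcont).continuousOn
    · exact (continuous_const.mul hψcont).continuousOn
  have hintle : (∫ u in (0:ℝ)..1, ρ τ' u) ≤ ∫ u in (0:ℝ)..1, V τ' u := by
    apply intervalIntegral.integral_mono_on (by norm_num) (hii hρτ'cont) (hii hVcont)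
    intro u hu
    exact hVle u hu
  have hV0 : ρ τ' 0 ≤ V τ' 0 := hVle 0 hmem0
  -- computing the mass of V τ'
  have hsplit : (∫ u in (0:ℝ)..1, V τ' u)
      = (∫ u in (0:ℝ)..1, g u) + (τ' - τ₀) * (∫ u in (0:ℝ)..1, Φ u)
        + ε * (2/3) := by
    have e1 : (∫ u in (0:ℝ)..1, V τ' u)
        = (∫ u in (0:ℝ)..1, (g u + (τ' - τ₀) * Φ u)) + ∫ u in (0:ℝ)..1, ε * ψ u := by
      rw [← intervalIntegral.integral_add ((hii hgcont).add hicΦ) hicψ]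
    have e2 : (∫ u in (0:ℝ)..1, (g u + (τ' - τ₀) * Φ u))
        = (∫ u in (0:ℝ)..1, g u) + ∫ u in (0:ℝ)..1, (τ' - τ₀) * Φ u :=
      intervalIntegral.integral_add (hii hgcont) hicΦ
    rw [e1, e2, intervalIntegral.integral_const_mul, intervalIntegral.integral_const_mul, hψint]
  -- bound on the mass of Φ
  set D0 : ℝ := derivWithin g I 0 with hD0def
  have hGval : (∫ u in (0:ℝ)..1, G u) = 0 - D0 := by
    have h1 : (∫ u in (0:ℝ)..1, G u) = derivWithin g I 1 - derivWithin g I 0 := by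
      rw [hGdef, hIdef]
      rw [hIdef] at hg
      exact integral_d2 hg
    have h2 : derivWithin g I 1 = 0 := hneu τ₀ hτ₀
    rw [h1, h2]
  have hΦint_le : (∫ u in (0:ℝ)..1, Φ u) ≤ (0 - D0) + 3*δ := by
    have h1 : (∫ u in (0:ℝ)..1, Φ u) ≤ ∫ u in (0:ℝ)..1, (G u + 3*δ) := by
      apply intervalIntegral.integral_mono_on (by norm_num) (hΦcont.intervalIntegrable _ _)
        ((hii hGcont).add intervalIntegrable_const)
      intro u hu
      exact (hΦbounds u hu).2
    have h2 : (∫ u in (0:ℝ)..1, (G u + 3*δ)) = (0 - D0) + 3*δ := by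
      rw [intervalIntegral.integral_add (hii hGcont) intervalIntegrable_const,
        intervalIntegral.integral_const, hGval]
      norm_num
    linarith
  have hΦ0_le : Φ 0 ≤ α * D0 + 3*δ := by
    have h1 := (hΦbounds 0 hmem0).2
    have h2 : G 0 = α * D0 := hwentzell τ₀ hτ₀
    linarith
  -- assembling
  have hτgap : 0 ≤ τ' - τ₀ := by linarith
  have hV0val : V τ' 0 = g 0 + (τ' - τ₀) * Φ 0 + ε * ψ 0 := rfl
  have hεsmall : 0 ≤ ε := le_of_lt hεpos
  have step1 : ρ τ' 0 / α + (∫ u in (0:ℝ)..1, ρ τ' u)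
      ≤ V τ' 0 / α + ∫ u in (0:ℝ)..1, V τ' u := by
    apply add_le_add ?_ hintle
    gcongr
  have step2 : V τ' 0 / α + (∫ u in (0:ℝ)..1, V τ' u)
      ≤ (g 0 + (τ' - τ₀) * (α * D0 + 3*δ) + ε * 1) / α
        + ((∫ u in (0:ℝ)..1, g u) + (τ' - τ₀) * ((0 - D0) + 3*δ) + ε * (2/3)) := by
    apply add_le_add
    · rw [hV0val, hψ0]
      gcongr
    · rw [hsplit]
      have h1 : (τ' - τ₀) * (∫ u in (0:ℝ)..1, Φ u) ≤ (τ' - τ₀) * ((0 - D0) + 3*δ) :=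
        mul_le_mul_of_nonneg_left hΦint_le hτgap
      linarith
  have step3 : (g 0 + (τ' - τ₀) * (α * D0 + 3*δ) + ε * 1) / α
        + ((∫ u in (0:ℝ)..1, g u) + (τ' - τ₀) * ((0 - D0) + 3*δ) + ε * (2/3))
      = g 0 / α + (∫ u in (0:ℝ)..1, g u)
        + (τ' - τ₀) * (3*δ*(1/α + 1)) + ε * Mψ := by
    rw [hMψdef]
    field_simp
    ring
  have step4 : (τ' - τ₀) * (3*δ*(1/α + 1)) = (τ' - τ₀) * (3*ε₀/8) := by rw [hδ38]
  have step5 : ε * Mψ = ε₀ * (τ' - τ₀) / 2 := by linarith [hεMass]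
  have step6 : (τ' - τ₀) * (3*ε₀/8) + ε₀ * (τ' - τ₀) / 2 ≤ ε₀ * (τ' - τ₀) := by
    nlinarith [mul_nonneg (le_of_lt hε₀) hτgap]
  calc ρ τ' 0 / α + (∫ u in (0:ℝ)..1, ρ τ' u)
      ≤ V τ' 0 / α + ∫ u in (0:ℝ)..1, V τ' u := step1
    _ ≤ (g 0 + (τ' - τ₀) * (α * D0 + 3*δ) + ε * 1) / α
        + ((∫ u in (0:ℝ)..1, g u) + (τ' - τ₀) * ((0 - D0) + 3*δ) + ε * (2/3)) := step2
    _ = g 0 / α + (∫ u in (0:ℝ)..1, g u)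
        + (τ' - τ₀) * (3*δ*(1/α + 1)) + ε * Mψ := step3
    _ ≤ g 0 / α + (∫ u in (0:ℝ)..1, g u) + ε₀ * (τ' - τ₀) := by
        rw [step4, step5]
        linarith [step6]

end

noncomputable section

set_option maxHeartbeats 1600000 in
/-- The mass functional is non-increasing in time. -/
lemma mass_le {T α : ℝ} (hT : 0 < T) (hα : 0 < α) (ρ : ℝ → ℝ → ℝ)
    (hcont : ContinuousOn (fun p : ℝ × ℝ => ρ p.1 p.2) (Set.Icc 0 T ×ˢ Set.Icc 0 1))
    (hspace : ∀ t ∈ Set.Ioc 0 T, ContDiffOn ℝ 2 (ρ t) (Set.Icc (0:ℝ) 1))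
    (hheat : ∀ t ∈ Set.Ioc 0 T, ∀ u ∈ Set.Icc (0:ℝ) 1,
      HasDerivAt (fun s => ρ s u)
        (derivWithin (derivWithin (ρ t) (Set.Icc (0:ℝ) 1)) (Set.Icc (0:ℝ) 1) u) t)
    (hwentzell : ∀ t ∈ Set.Ioc 0 T,
      derivWithin (derivWithin (ρ t) (Set.Icc (0:ℝ) 1)) (Set.Icc (0:ℝ) 1) 0
        = α * derivWithin (ρ t) (Set.Icc (0:ℝ) 1) 0)
    (hneu : ∀ t ∈ Set.Ioc 0 T, derivWithin (ρ t) (Set.Icc (0:ℝ) 1) 1 = 0)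
    {s t : ℝ} (hs : s ∈ Set.Ioc 0 T) (ht : t ∈ Set.Ioc 0 T) (hst : s ≤ t) :
    ρ t 0 / α + (∫ u in (0:ℝ)..1, ρ t u) ≤ ρ s 0 / α + ∫ u in (0:ℝ)..1, ρ s u := by
  rcases eq_or_lt_of_le hst with rfl | hlt
  · exact le_refl _
  have main : ∀ ε₀ : ℝ, 0 < ε₀ →
      ρ t 0 / α + (∫ u in (0:ℝ)..1, ρ t u)
        ≤ ρ s 0 / α + (∫ u in (0:ℝ)..1, ρ s u) + ε₀ * (t - s) := by
    intro ε₀ hε₀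
    set F : ℝ → ℝ := fun τ => ρ τ 0 / α + ∫ u in (0:ℝ)..1, ρ τ u with hFdef
    have hFcont : ContinuousOn F (Set.Icc 0 T) := contMass hα ρ hcont
    have hsubIcc : Set.Icc s t ⊆ Set.Icc 0 T := Set.Icc_subset_Icc (le_of_lt hs.1) ht.2
    set A : Set ℝ := {τ ∈ Set.Icc s t | F τ ≤ F s + ε₀ * (τ - s)} with hAdef
    have hsA : s ∈ A := by
      constructor
      · exact ⟨le_refl s, hst⟩
      · linarith
    have hAsub : A ⊆ Set.Icc s t := fun τ hτ => hτ.1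
    have hAclosed : IsClosed A := by
      have h1 : A = Set.Icc s t ∩ (fun τ => F τ - ε₀ * (τ - s)) ⁻¹' (Set.Iic (F s)) := by
        ext τ
        constructor
        · rintro ⟨h1, h2⟩
          exact ⟨h1, by simp only [Set.mem_preimage, Set.mem_Iic]; linarith⟩
        · rintro ⟨h1, h2⟩
          simp only [Set.mem_preimage, Set.mem_Iic] at h2
          exact ⟨h1, by linarith⟩
      rw [h1]
      apply ContinuousOn.preimage_isClosed_of_isClosed ?_ isClosed_Icc isClosed_Iic
      apply ContinuousOn.sub
      · exact hFcont.mono hsubIcc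
      · exact (continuous_const.mul (continuous_id.sub continuous_const)).continuousOn
    have hAcomp : IsCompact A := isCompact_Icc.of_isClosed_subset hAclosed hAsub
    have hAne : A.Nonempty := ⟨s, hsA⟩
    set τs : ℝ := sSup A with hτsdef
    have hτsA : τs ∈ A := hAcomp.sSup_mem hAne
    have hτsIcc : τs ∈ Set.Icc s t := hAsub hτsA
    have hτsIoc : τs ∈ Set.Ioc 0 T := ⟨lt_of_lt_of_le hs.1 hτsIcc.1, le_trans hτsIcc.2 ht.2⟩
    rcases eq_or_lt_of_le hτsIcc.2 with heq | hlt2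
    · -- τs = t, so t ∈ A and we are done
      have := hτsA.2
      rw [heq] at this
      simpa only [hFdef] using this
    · -- otherwise extend beyond the supremum: contradiction
      exfalso
      obtain ⟨Δ, hΔpos, hstep⟩ :=
        one_step hT hα ρ hcont hspace hheat hwentzell hneu hτsIoc ht hlt2 hε₀
      set τ'' : ℝ := min (τs + Δ) t with hτ''def
      have hτ''1 : τs < τ'' := by
        apply lt_min (by linarith) hlt2
      have hτ''2 : τ'' ∈ Set.Ioc τs (min (τs + Δ) t) := ⟨hτ''1, le_refl _⟩
      have hτ''le := hstep τ'' hτ''2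
      have hτ''Icc : τ'' ∈ Set.Icc s t := by
        constructor
        · exact le_trans hτsIcc.1 (le_of_lt hτ''1)
        · exact min_le_right _ _
      have hτ''A : τ'' ∈ A := by
        refine ⟨hτ''Icc, ?_⟩
        have h1 := hτsA.2
        simp only [hFdef] at h1 ⊢
        have h2 : ρ τ'' 0 / α + (∫ u in (0:ℝ)..1, ρ τ'' u)
            ≤ ρ τs 0 / α + (∫ u in (0:ℝ)..1, ρ τs u) + ε₀ * (τ'' - τs) := hτ''le
        have h3 : τs - s ≥ 0 := by linarith [hτsIcc.1]
        have h4 : τ'' - τs ≥ 0 := le_of_lt (by linarith)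
        nlinarith [hε₀]
      have hcontr := le_csSup hAcomp.bddAbove hτ''A
      exact absurd hcontr (not_le.mpr hτ''1)
  by_contra hcon
  push_neg at hcon
  set L := ρ t 0 / α + (∫ u in (0:ℝ)..1, ρ t u) with hL
  set R := ρ s 0 / α + (∫ u in (0:ℝ)..1, ρ s u) with hR
  have hgap : 0 < t - s := by linarith
  have hpos : 0 < (L - R) / (2 * (t - s)) := by
    apply div_pos (by linarith) (by linarith)
  have := main ((L - R) / (2 * (t - s))) hpos
  have heq : (L - R) / (2 * (t - s)) * (t - s) = (L - R)/2 := by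
    field_simp
  rw [heq] at this
  clear_value L R
  linarith

end

/-- For a classical solution of the heat equation on `[0,T]×[0,1]` with Wentzell boundary
condition `∂²_{uu}ρ(t,0) = α ∂_u ρ(t,0)` and Neumann condition `∂_u ρ(t,1) = 0`, the quantity
`t ↦ ρ(t,0)/α + ∫₀¹ ρ(t,u) du` is constant in time on `(0,T]`. -/
theorem stmt5 (T α : ℝ) (hT : 0 < T) (hα : 0 < α) (ρ : ℝ → ℝ → ℝ)
    (hcont : ContinuousOn (fun p : ℝ × ℝ => ρ p.1 p.2) (Set.Icc 0 T ×ˢ Set.Icc 0 1))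
    (hspace : ∀ t ∈ Set.Ioc 0 T, ContDiffOn ℝ 2 (ρ t) (Set.Icc (0:ℝ) 1))
    -- heat equation (extended by continuity to the closed spatial interval), together with
    -- differentiability in time: `∂_t ρ(t,u) = ∂²_{uu} ρ(t,u)`
    (hheat : ∀ t ∈ Set.Ioc 0 T, ∀ u ∈ Set.Icc (0:ℝ) 1,
      HasDerivAt (fun s => ρ s u)
        (derivWithin (derivWithin (ρ t) (Set.Icc (0:ℝ) 1)) (Set.Icc (0:ℝ) 1) u) t)
    (hwentzell : ∀ t ∈ Set.Ioc 0 T,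
      derivWithin (derivWithin (ρ t) (Set.Icc (0:ℝ) 1)) (Set.Icc (0:ℝ) 1) 0
        = α * derivWithin (ρ t) (Set.Icc (0:ℝ) 1) 0)
    (hneu : ∀ t ∈ Set.Ioc 0 T, derivWithin (ρ t) (Set.Icc (0:ℝ) 1) 1 = 0) :
    ∀ t ∈ Set.Ioc 0 T, ∀ s ∈ Set.Ioc 0 T,
      ρ t 0 / α + ∫ u in (0:ℝ)..1, ρ t u = ρ s 0 / α + ∫ u in (0:ℝ)..1, ρ s u := by
  have hUD : UniqueDiffOn ℝ (Set.Icc (0:ℝ) 1) := uniqueDiffOn_Icc_zero_one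
  -- the negated solution
  have hcont' : ContinuousOn (fun p : ℝ × ℝ => -ρ p.1 p.2) (Set.Icc 0 T ×ˢ Set.Icc 0 1) :=
    hcont.neg
  have hspace' : ∀ t ∈ Set.Ioc 0 T, ContDiffOn ℝ 2 (fun u => -ρ t u) (Set.Icc (0:ℝ) 1) :=
    fun t ht => (hspace t ht).neg
  have hd1neg : ∀ t ∈ Set.Ioc 0 T, ∀ u ∈ Set.Icc (0:ℝ) 1,
      derivWithin (fun v => -ρ t v) (Set.Icc (0:ℝ) 1) u
        = -derivWithin (ρ t) (Set.Icc (0:ℝ) 1) u :=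
    fun t _ u hu => derivWithin.fun_neg
  have hd2neg : ∀ t ∈ Set.Ioc 0 T, ∀ u ∈ Set.Icc (0:ℝ) 1,
      derivWithin (derivWithin (fun v => -ρ t v) (Set.Icc (0:ℝ) 1)) (Set.Icc (0:ℝ) 1) u
        = -derivWithin (derivWithin (ρ t) (Set.Icc (0:ℝ) 1)) (Set.Icc (0:ℝ) 1) u := by
    intro t ht u hu
    have h1 : derivWithin (derivWithin (fun v => -ρ t v) (Set.Icc (0:ℝ) 1)) (Set.Icc (0:ℝ) 1) u
        = derivWithin (fun v => -derivWithin (ρ t) (Set.Icc (0:ℝ) 1) v) (Set.Icc (0:ℝ) 1) u :=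
      derivWithin_congr (fun v hv => hd1neg t ht v hv) (hd1neg t ht u hu)
    rw [h1, derivWithin.fun_neg]
  have hheat' : ∀ t ∈ Set.Ioc 0 T, ∀ u ∈ Set.Icc (0:ℝ) 1,
      HasDerivAt (fun s => -ρ s u)
        (derivWithin (derivWithin (fun v => -ρ t v) (Set.Icc (0:ℝ) 1)) (Set.Icc (0:ℝ) 1) u) t := by
    intro t ht u hu
    rw [hd2neg t ht u hu]
    exact (hheat t ht u hu).neg
  have hwentzell' : ∀ t ∈ Set.Ioc 0 T,
      derivWithin (derivWithin (fun v => -ρ t v) (Set.Icc (0:ℝ) 1)) (Set.Icc (0:ℝ) 1) 0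
        = α * derivWithin (fun v => -ρ t v) (Set.Icc (0:ℝ) 1) 0 := by
    intro t ht
    rw [hd2neg t ht 0 (by norm_num), hd1neg t ht 0 (by norm_num), hwentzell t ht]
    ring
  have hneu' : ∀ t ∈ Set.Ioc 0 T, derivWithin (fun v => -ρ t v) (Set.Icc (0:ℝ) 1) 1 = 0 := by
    intro t ht
    rw [hd1neg t ht 1 (by norm_num), hneu t ht]
    ring
  have both : ∀ a ∈ Set.Ioc 0 T, ∀ b ∈ Set.Ioc 0 T, a ≤ b →
      ρ b 0 / α + (∫ u in (0:ℝ)..1, ρ b u) = ρ a 0 / α + ∫ u in (0:ℝ)..1, ρ a u := by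
    intro a ha b hb hab
    have h1 := mass_le hT hα ρ hcont hspace hheat hwentzell hneu ha hb hab
    have h2 := mass_le hT hα (fun τ u => -ρ τ u) hcont' hspace' hheat' hwentzell' hneu'
      ha hb hab
    simp only [intervalIntegral.integral_neg, neg_div] at h2
    have h3 : ρ a 0 / α + (∫ u in (0:ℝ)..1, ρ a u)
        ≤ ρ b 0 / α + (∫ u in (0:ℝ)..1, ρ b u) := by linarith
    linarith
  intro t ht s hs
  rcases le_total s t with hst | hts
  · exact both s hs t ht hst
  · exact (both t ht s hs hts).symm
end

section
/- There is at most one weak solution to the heat equation on [0,1] with Neumann boundary conditions at both endpoints: if ρ¹, ρ² : [0,T]×[0,1] → [0,1] are measurable and satisfy ⟨ρ_t, H⟩ − ⟨γ, H⟩ = ∫₀ᵗ ⟨ρ_s, H''⟩ ds for all t ∈ [0,T] and all H ∈ C²[0,1] with H'(0) = H'(1) = 0, with the same γ, then ρ¹_t = ρ²_t in L²[0,1] for all t. -/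
open Set MeasureTheory intervalIntegral Real Filter

lemma bddInt {E : Type*} [NormedAddCommGroup E] {f : ℝ → E}
    (hm : AEStronglyMeasurable f volume) {C : ℝ} (hb : ∀ t, ‖f t‖ ≤ C) (a b : ℝ) :
    IntervalIntegrable f volume a b := by
  rw [intervalIntegrable_iff]
  haveI : IsFiniteMeasure (volume.restrict (uIoc a b)) :=
    ⟨by rw [Measure.restrict_apply_univ]; exact measure_Ioc_lt_top⟩
  exact Integrable.mono' (integrable_const C) hm.restrict (ae_of_all _ hb)

lemma volterra_zero {c T C : ℝ} {f : ℝ → ℝ} (hm : Measurable f)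
    (hb : ∀ t, |f t| ≤ C)
    (heq : ∀ t ∈ Icc (0:ℝ) T, f t = c * ∫ s in (0:ℝ)..t, f s) :
    ∀ t ∈ Icc (0:ℝ) T, f t = 0 := by
  have hInt : ∀ a b : ℝ, IntervalIntegrable f volume a b :=
    bddInt hm.aestronglyMeasurable (by simpa using hb)
  set F : ℝ → ℝ := fun t => ∫ s in (0:ℝ)..t, f s with hF
  have hFc : Continuous F := intervalIntegral.continuous_primitive hInt 0
  have hderiv : ∀ t ∈ Ico (0:ℝ) T, HasDerivWithinAt F (f t) (Ici t) t := by
    intro t ht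
    have hmem : Ioc t T ∈ nhdsWithin t (Ioi t) := Ioc_mem_nhdsGT_of_mem ⟨le_refl t, ht.2⟩
    have hcw : ContinuousWithinAt f (Ioi t) t := by
      have hc2 : ContinuousWithinAt (fun s => c * F s) (Ioi t) t :=
        (continuous_const.mul hFc).continuousWithinAt
      apply hc2.congr_of_eventuallyEq
      · filter_upwards [hmem] with s hs using heq s ⟨le_trans ht.1 hs.1.le, hs.2⟩
      · exact heq t ⟨ht.1, ht.2.le⟩
    exact intervalIntegral.integral_hasDerivWithinAt_right (hInt 0 t)
      (hm.stronglyMeasurable.stronglyMeasurableAtFilter) hcw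
  have hbound : ∀ t ∈ Ico (0:ℝ) T, ‖f t‖ ≤ |c| * ‖F t‖ + 0 := by
    intro t ht
    rw [heq t ⟨ht.1, ht.2.le⟩, add_zero, Real.norm_eq_abs, Real.norm_eq_abs, abs_mul]
  have hg := norm_le_gronwallBound_of_norm_deriv_right_le (δ := 0) (K := |c|) (ε := 0)
    hFc.continuousOn hderiv (by simp [hF]) hbound
  intro t ht
  have h0 := hg t ht
  rw [gronwallBound_ε0_δ0] at h0
  have hF0 : F t = 0 := norm_le_zero_iff.mp h0
  rw [heq t ht, show (∫ s in (0:ℝ)..t, f s) = F t from rfl, hF0, mul_zero]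


lemma cos_complete {h : ℝ → ℝ} (hm : Measurable h) (hb : ∀ u, |h u| ≤ 1)
    (hc : ∀ n : ℕ, (∫ u in (0:ℝ)..1, h u * Real.cos (n * Real.pi * u)) = 0) :
    h =ᵐ[volume.restrict (Icc (0:ℝ) 1)] 0 := by
  haveI : Fact ((0:ℝ) < 2) := ⟨two_pos⟩
  set g : ℝ → ℂ := fun x => ((h |x| : ℝ) : ℂ) with hgdef
  have hgm : Measurable g := Complex.measurable_ofReal.comp (hm.comp measurable_abs)
  have hgb : ∀ x, ‖g x‖ ≤ 1 := fun x => by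
    rw [show g x = ((h |x| : ℝ) : ℂ) from rfl, Complex.norm_real, Real.norm_eq_abs]
    exact hb |x|
  set G : AddCircle 2 → ℂ := AddCircle.liftIoc 2 (-1) g with hGdef
  have hGm : Measurable G :=
    (hgm.comp measurable_subtype_coe).comp (AddCircle.measurableEquivIoc 2 (-1)).measurable
  have hGb : ∀ z, ‖G z‖ ≤ 1 := fun z => hgb _
  have two_cos : ∀ θ : ℂ, Complex.exp (θ * Complex.I) + Complex.exp (-θ * Complex.I)
      = 2 * Complex.cos θ := by
    intro θ
    rw [Complex.exp_mul_I, show (-θ * Complex.I) = (-θ) * Complex.I by ring,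
      Complex.exp_mul_I, Complex.cos_neg, Complex.sin_neg]
    ring
  have key : ∀ n : ℤ, fourierCoeff G n = 0 := by
    intro n
    set e : ℝ → ℂ := fun x => Complex.exp (-(Real.pi * n * x) * Complex.I) with hedef
    have he_cont : Continuous e := by
      apply Complex.continuous_exp.comp
      fun_prop
    have heb : ∀ x : ℝ, ‖e x‖ ≤ 1 := by
      intro x
      rw [hedef]
      simp only
      rw [show -(↑Real.pi * (n:ℂ) * (x:ℂ)) * Complex.I
        = ((-(Real.pi * n * x) : ℝ) : ℂ) * Complex.I by push_cast; ring]
      rw [Complex.norm_exp_ofReal_mul_I]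
    have hfour : ∀ x : ℝ, (fourier (-n) (x : AddCircle (2:ℝ)) : ℂ) = e x := by
      intro x
      rw [fourier_coe_apply]
      congr 1
      push_cast
      ring
    have hmul_bdd : ∀ (u v : ℝ → ℂ), (∀ x, ‖u x‖ ≤ 1) → (∀ x, ‖v x‖ ≤ 1) →
        ∀ x, ‖u x * v x‖ ≤ 1 := by
      intro u v hu hv x
      rw [norm_mul]
      exact mul_le_one₀ (hu x) (norm_nonneg _) (hv x)
    have hi2 : IntervalIntegrable (fun x => e x * g x) volume 0 1 :=
      bddInt (he_cont.measurable.mul hgm).aestronglyMeasurable (hmul_bdd _ _ heb hgb) 0 1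
    have hi1 : IntervalIntegrable (fun x => e x * g x) volume (-1) 0 :=
      bddInt (he_cont.measurable.mul hgm).aestronglyMeasurable (hmul_bdd _ _ heb hgb) (-1) 0
    have hi3 : IntervalIntegrable (fun x => e (-x) * g (-x)) volume 0 1 :=
      bddInt ((he_cont.comp continuous_neg).measurable.mul
        (hgm.comp measurable_neg)).aestronglyMeasurable
        (fun x => hmul_bdd _ _ (fun y => heb (-y)) (fun y => hgb (-y)) x) 0 1
    suffices hI : (∫ x in (-1:ℝ)..(-1+2), (fourier (-n) (x : AddCircle (2:ℝ)) : ℂ) • G x) = 0 by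
      rw [fourierCoeff_eq_intervalIntegral G n (-1), hI, smul_zero]
    have h11 : (-1:ℝ) + 2 = 1 := by norm_num
    rw [h11]
    have step1 : (∫ x in (-1:ℝ)..1, (fourier (-n) (x : AddCircle (2:ℝ)) : ℂ) • G x)
        = ∫ x in (-1:ℝ)..1, e x * g x := by
      rw [intervalIntegral.integral_of_le (by norm_num : (-1:ℝ) ≤ 1),
        intervalIntegral.integral_of_le (by norm_num : (-1:ℝ) ≤ 1)]
      refine setIntegral_congr_fun measurableSet_Ioc fun x hx => ?_
      rw [hfour, smul_eq_mul, hGdef,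
        AddCircle.liftIoc_coe_apply (⟨hx.1, by linarith [hx.2]⟩ : x ∈ Ioc (-1:ℝ) (-1+2))]
    have step2 : (∫ x in (-1:ℝ)..1, e x * g x)
        = (∫ x in (-1:ℝ)..0, e x * g x) + ∫ x in (0:ℝ)..1, e x * g x :=
      (integral_add_adjacent_intervals hi1 hi2).symm
    have step3 : (∫ x in (-1:ℝ)..0, e x * g x) = ∫ x in (0:ℝ)..1, e (-x) * g (-x) := by
      rw [intervalIntegral.integral_comp_neg (fun x => e x * g x)]
      norm_num
    have step4 : (∫ x in (0:ℝ)..1, e (-x) * g (-x)) + (∫ x in (0:ℝ)..1, e x * g x)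
        = ∫ x in (0:ℝ)..1, (2 * Complex.cos (Real.pi * n * x)) * g x := by
      rw [← integral_add hi3 hi2]
      refine intervalIntegral.integral_congr fun x _ => ?_
      have hgeven : g (-x) = g x := by rw [hgdef]; simp [abs_neg]
      have : e (-x) + e x = 2 * Complex.cos (Real.pi * n * x) := by
        rw [hedef]
        simp only
        rw [show -((Real.pi:ℂ) * (n:ℂ) * ((-x : ℝ):ℂ)) * Complex.I
            = ((Real.pi:ℂ) * (n:ℂ) * (x:ℂ)) * Complex.I by push_cast; ring,
          show -((Real.pi:ℂ) * (n:ℂ) * ((x:ℝ):ℂ)) * Complex.I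
            = (-((Real.pi:ℂ) * (n:ℂ) * (x:ℂ))) * Complex.I by push_cast; ring]
        exact two_cos _
      rw [hgeven]
      rw [show e (-x) * g x + e x * g x = (e (-x) + e x) * g x by ring, this]
    have step5 : (∫ x in (0:ℝ)..1, (2 * Complex.cos (Real.pi * n * x)) * g x)
        = 2 * ∫ x in (0:ℝ)..1, Complex.cos (Real.pi * n * x) * g x := by
      simp_rw [mul_assoc]
      exact intervalIntegral.integral_const_mul 2 _
    have step6 : (∫ x in (0:ℝ)..1, Complex.cos (Real.pi * n * x) * g x)
        = ((∫ x in (0:ℝ)..1, h x * Real.cos ((n.natAbs : ℝ) * Real.pi * x) : ℝ) : ℂ) := by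
      rw [← intervalIntegral.integral_ofReal]
      rw [intervalIntegral.integral_of_le (by norm_num : (0:ℝ) ≤ 1),
        intervalIntegral.integral_of_le (by norm_num : (0:ℝ) ≤ 1)]
      refine setIntegral_congr_fun measurableSet_Ioc fun x hx => ?_
      have hgx : g x = ((h x : ℝ) : ℂ) := by rw [hgdef]; simp [abs_of_pos hx.1]
      have habs : |(n:ℝ)| = (n.natAbs : ℝ) := by
        rw [Nat.cast_natAbs]
        exact Int.cast_abs.symm
      have hcos : Real.cos (Real.pi * n * x) = Real.cos ((n.natAbs : ℝ) * Real.pi * x) := by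
        rw [← Real.cos_abs (Real.pi * n * x), ← Real.cos_abs ((n.natAbs : ℝ) * Real.pi * x)]
        congr 1
        rw [abs_mul, abs_mul, abs_mul, abs_mul, abs_of_pos Real.pi_pos,
          abs_of_nonneg hx.1.le, habs,
          abs_of_nonneg (by positivity : (0:ℝ) ≤ (n.natAbs : ℝ))]
        ring
      rw [hgx,
        show ((Real.pi:ℂ) * (n:ℂ) * (x:ℂ)) = ((Real.pi * n * x : ℝ) : ℂ) by push_cast; ring,
        ← Complex.ofReal_cos, ← Complex.ofReal_mul, Complex.ofReal_inj, hcos]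
      ring
    rw [step1, step2, step3, step4, step5, step6, hc n.natAbs]
    simp
  -- Hilbert space argument
  have hmem : MemLp G 2 AddCircle.haarAddCircle :=
    MemLp.of_bound hGm.aestronglyMeasurable 1 (Eventually.of_forall hGb)
  set Fg := hmem.toLp G with hFgdef
  have hrepr0 : fourierBasis.repr Fg = 0 := by
    ext i
    rw [fourierBasis_repr]
    have hcoe : fourierCoeff (⇑Fg) i = fourierCoeff G i := by
      unfold fourierCoeff
      apply MeasureTheory.integral_congr_ae
      filter_upwards [hmem.coeFn_toLp] with x hx
      rw [hx]
    simp [hcoe, key i]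
  have hFg0 : Fg = 0 := fourierBasis.repr.injective (by rw [hrepr0, map_zero])
  have hG0 : G =ᵐ[(AddCircle.haarAddCircle : Measure (AddCircle (2:ℝ)))] 0 := by
    have h1 := hmem.coeFn_toLp
    have h2 : (⇑Fg) =ᵐ[(AddCircle.haarAddCircle : Measure (AddCircle (2:ℝ)))] 0 := by
      rw [hFg0]; exact Lp.coeFn_zero ℂ 2 _
    exact h1.symm.trans h2
  have hGv : G =ᵐ[(volume : Measure (AddCircle (2:ℝ)))] 0 := by
    rw [AddCircle.volume_eq_smul_haarAddCircle]
    exact Measure.ae_smul_measure hG0 _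
  have hcomp := (AddCircle.measurePreserving_mk (T := 2) (-1)).quasiMeasurePreserving.ae_eq_comp hGv
  have h11 : (-1:ℝ) + 2 = 1 := by norm_num
  rw [h11] at hcomp
  have hg0 : g =ᵐ[volume.restrict (Ioc (-1:ℝ) 1)] 0 := by
    filter_upwards [hcomp, self_mem_ae_restrict (measurableSet_Ioc : MeasurableSet (Ioc (-1:ℝ) 1))]
      with x hx1 hx2
    have hlift : G ↑x = g x := AddCircle.liftIoc_coe_apply
      (⟨hx2.1, by linarith [hx2.2]⟩ : x ∈ Ioc (-1:ℝ) (-1+2))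
    simp only [Function.comp_apply, Pi.zero_apply] at hx1
    simp only [Pi.zero_apply]
    rw [← hlift]
    exact hx1
  have hg01 : g =ᵐ[volume.restrict (Ioc (0:ℝ) 1)] 0 :=
    ae_restrict_of_ae_restrict_of_subset (Ioc_subset_Ioc_left (by norm_num)) hg0
  have hh0 : h =ᵐ[volume.restrict (Ioc (0:ℝ) 1)] 0 := by
    filter_upwards [hg01, self_mem_ae_restrict (measurableSet_Ioc : MeasurableSet (Ioc (0:ℝ) 1))]
      with x hx1 hx2
    have hgx : g x = ((h x : ℝ) : ℂ) := by rw [hgdef]; simp [abs_of_pos hx2.1]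
    simp only [Pi.zero_apply] at hx1 ⊢
    rw [hgx] at hx1
    exact_mod_cast hx1
  rwa [Measure.restrict_congr_set Ioc_ae_eq_Icc] at hh0


-- kernel coefficient measurability
lemma coefMeas {ρ : ℝ → ℝ → ℝ} (hmeas : Measurable fun p : ℝ × ℝ => ρ p.1 p.2)
    {c : ℝ → ℝ} (hc : Continuous c) :
    Measurable fun t => ∫ u in (0:ℝ)..1, ρ t u * c u := by
  have heq : (fun t => ∫ u in (0:ℝ)..1, ρ t u * c u)
      = fun t => ∫ u in Ioc (0:ℝ) 1, ρ t u * c u := by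
    funext t
    exact intervalIntegral.integral_of_le zero_le_one
  rw [heq]
  have hsm : StronglyMeasurable (fun p : ℝ × ℝ => ρ p.1 p.2 * c p.2) :=
    (hmeas.mul (hc.measurable.comp measurable_snd)).stronglyMeasurable
  exact hsm.integral_prod_right'.measurable


/-- Uniqueness of weak solutions to the heat equation on `[0,1]` with Neumann boundary
conditions at both endpoints: two measurable `[0,1]`-valued weak solutions with the same
initial datum `γ` coincide in `L²[0,1]` for all `t ∈ [0,T]`. -/
theorem stmt9 (T : ℝ) (hT : 0 < T) (γ : ℝ → ℝ)
    (hγmeas : Measurable γ) (hγrange : ∀ u, γ u ∈ Set.Icc (0:ℝ) 1)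
    (ρ₁ ρ₂ : ℝ → ℝ → ℝ)
    (hmeas₁ : Measurable fun p : ℝ × ℝ => ρ₁ p.1 p.2)
    (hmeas₂ : Measurable fun p : ℝ × ℝ => ρ₂ p.1 p.2)
    (hrange₁ : ∀ t u, ρ₁ t u ∈ Set.Icc (0:ℝ) 1)
    (hrange₂ : ∀ t u, ρ₂ t u ∈ Set.Icc (0:ℝ) 1)
    (h₁ : ∀ H : ℝ → ℝ, ContDiff ℝ 2 H → deriv H 0 = 0 → deriv H 1 = 0 →
      ∀ t ∈ Set.Icc (0:ℝ) T,
        (∫ u in (0:ℝ)..1, ρ₁ t u * H u) - (∫ u in (0:ℝ)..1, γ u * H u)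
          = ∫ s in (0:ℝ)..t, ∫ u in (0:ℝ)..1, ρ₁ s u * deriv (deriv H) u)
    (h₂ : ∀ H : ℝ → ℝ, ContDiff ℝ 2 H → deriv H 0 = 0 → deriv H 1 = 0 →
      ∀ t ∈ Set.Icc (0:ℝ) T,
        (∫ u in (0:ℝ)..1, ρ₂ t u * H u) - (∫ u in (0:ℝ)..1, γ u * H u)
          = ∫ s in (0:ℝ)..t, ∫ u in (0:ℝ)..1, ρ₂ s u * deriv (deriv H) u) :
    ∀ t ∈ Set.Icc (0:ℝ) T,
      ρ₁ t =ᵐ[MeasureTheory.volume.restrict (Set.Icc (0:ℝ) 1)] ρ₂ t := by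
  have hsec₁ : ∀ t, Measurable (ρ₁ t) := fun t => hmeas₁.comp measurable_prodMk_left
  have hsec₂ : ∀ t, Measurable (ρ₂ t) := fun t => hmeas₂.comp measurable_prodMk_left
  have hb₁ : ∀ t u, |ρ₁ t u| ≤ 1 := fun t u =>
    abs_le.mpr ⟨by linarith [(hrange₁ t u).1], (hrange₁ t u).2⟩
  have hb₂ : ∀ t u, |ρ₂ t u| ≤ 1 := fun t u =>
    abs_le.mpr ⟨by linarith [(hrange₂ t u).1], (hrange₂ t u).2⟩
  -- main claim: all cosine coefficients of the difference vanish
  have main : ∀ n : ℕ, ∀ t ∈ Icc (0:ℝ) T,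
      (∫ u in (0:ℝ)..1, (ρ₁ t u - ρ₂ t u) * Real.cos ((n:ℝ) * Real.pi * u)) = 0 := by
    intro n
    set c : ℝ := (n : ℝ) * Real.pi with hcdef
    set H : ℝ → ℝ := fun x => Real.cos ((n:ℝ) * Real.pi * x) with hHdef
    have hHbd : ∀ u, |H u| ≤ 1 := fun u => Real.abs_cos_le_one _
    have hHcont : Continuous H := by
      apply Real.continuous_cos.comp
      fun_prop
    have hlin : ∀ x : ℝ, HasDerivAt (fun y : ℝ => (n:ℝ) * Real.pi * y) ((n:ℝ) * Real.pi) x := by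
      intro x
      simpa using (hasDerivAt_id x).const_mul ((n:ℝ) * Real.pi)
    have hH1 : ∀ x, HasDerivAt H (-Real.sin ((n:ℝ) * Real.pi * x) * ((n:ℝ) * Real.pi)) x :=
      fun x => (hlin x).cos
    have hd1 : deriv H = fun x => -Real.sin ((n:ℝ) * Real.pi * x) * ((n:ℝ) * Real.pi) :=
      funext fun x => (hH1 x).deriv
    have hH2 : ∀ u, deriv (deriv H) u
        = -((n:ℝ) * Real.pi) ^ 2 * Real.cos ((n:ℝ) * Real.pi * u) := by
      intro u
      rw [hd1]
      have hs : HasDerivAt (fun x => -Real.sin ((n:ℝ) * Real.pi * x) * ((n:ℝ) * Real.pi))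
          (-(Real.cos ((n:ℝ) * Real.pi * u) * ((n:ℝ) * Real.pi)) * ((n:ℝ) * Real.pi)) u :=
        ((hlin u).sin).neg.mul_const _
      rw [hs.deriv]
      ring
    have hcd : ContDiff ℝ 2 H := (contDiff_const.mul contDiff_id).cos
    have hder0 : deriv H 0 = 0 := by rw [hd1]; simp
    have hder1 : deriv H 1 = 0 := by
      rw [hd1]
      simp [Real.sin_nat_mul_pi]
    -- coefficient functions
    set a₁ : ℝ → ℝ := fun s => ∫ u in (0:ℝ)..1, ρ₁ s u * H u with ha₁def
    set a₂ : ℝ → ℝ := fun s => ∫ u in (0:ℝ)..1, ρ₂ s u * H u with ha₂def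
    have hm₁ : Measurable a₁ := coefMeas hmeas₁ hHcont
    have hm₂ : Measurable a₂ := coefMeas hmeas₂ hHcont
    have hmulbd : ∀ (ρ : ℝ → ℝ → ℝ), (∀ t u, |ρ t u| ≤ 1) → ∀ s u, ‖ρ s u * H u‖ ≤ 1 := by
      intro ρ hb s u
      rw [Real.norm_eq_abs, abs_mul]
      exact mul_le_one₀ (hb s u) (abs_nonneg _) (hHbd u)
    have hII₁ : ∀ s, IntervalIntegrable (fun u => ρ₁ s u * H u) volume 0 1 := fun s =>
      bddInt ((hsec₁ s).mul hHcont.measurable).aestronglyMeasurable (hmulbd ρ₁ hb₁ s) 0 1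
    have hII₂ : ∀ s, IntervalIntegrable (fun u => ρ₂ s u * H u) volume 0 1 := fun s =>
      bddInt ((hsec₂ s).mul hHcont.measurable).aestronglyMeasurable (hmulbd ρ₂ hb₂ s) 0 1
    have habd : ∀ (ρ : ℝ → ℝ → ℝ), (∀ t u, |ρ t u| ≤ 1) →
        ∀ s, |∫ u in (0:ℝ)..1, ρ s u * H u| ≤ 1 := by
      intro ρ hb s
      have := intervalIntegral.norm_integral_le_of_norm_le_const
        (C := 1) (f := fun u => ρ s u * H u) (a := 0) (b := 1)
        (fun x _ => hmulbd ρ hb s x)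
      simpa using this
    have hab₁ : ∀ s, |a₁ s| ≤ 1 := habd ρ₁ hb₁
    have hab₂ : ∀ s, |a₂ s| ≤ 1 := habd ρ₂ hb₂
    -- second-derivative inner integral identity
    have hinner : ∀ (ρ : ℝ → ℝ → ℝ), (∀ s, Measurable (ρ s)) → (∀ t u, |ρ t u| ≤ 1) → ∀ s,
        (∫ u in (0:ℝ)..1, ρ s u * deriv (deriv H) u)
          = -c ^ 2 * ∫ u in (0:ℝ)..1, ρ s u * H u := by
      intro ρ hsec hb s
      have hcong : ∀ u ∈ uIcc (0:ℝ) 1, ρ s u * deriv (deriv H) u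
          = -c ^ 2 * (ρ s u * H u) := by
        intro u _
        rw [hH2 u, hHdef, hcdef]
        ring
      rw [intervalIntegral.integral_congr hcong, intervalIntegral.integral_const_mul]
    -- the Volterra equation for φ = a₁ - a₂
    set φ : ℝ → ℝ := fun s => a₁ s - a₂ s with hφdef
    have hφm : Measurable φ := hm₁.sub hm₂
    have hφb : ∀ s, |φ s| ≤ 2 := by
      intro s
      have := abs_sub (a₁ s) (a₂ s)
      calc |φ s| ≤ |a₁ s| + |a₂ s| := abs_sub _ _
        _ ≤ 2 := by linarith [hab₁ s, hab₂ s]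
    have hφII : ∀ a b : ℝ, IntervalIntegrable φ volume a b :=
      bddInt hφm.aestronglyMeasurable (by simpa using hφb)
    have haII : ∀ a b : ℝ, IntervalIntegrable a₁ volume a b :=
      bddInt hm₁.aestronglyMeasurable (by simpa using hab₁)
    have haII₂ : ∀ a b : ℝ, IntervalIntegrable a₂ volume a b :=
      bddInt hm₂.aestronglyMeasurable (by simpa using hab₂)
    have hvolterra : ∀ t ∈ Icc (0:ℝ) T, φ t = -c ^ 2 * ∫ s in (0:ℝ)..t, φ s := by
      intro t ht
      have e₁ := h₁ H hcd hder0 hder1 t ht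
      have e₂ := h₂ H hcd hder0 hder1 t ht
      have r₁ : (∫ s in (0:ℝ)..t, ∫ u in (0:ℝ)..1, ρ₁ s u * deriv (deriv H) u)
          = -c ^ 2 * ∫ s in (0:ℝ)..t, a₁ s := by
        rw [intervalIntegral.integral_congr
          (fun s _ => hinner ρ₁ hsec₁ hb₁ s), intervalIntegral.integral_const_mul]
      have r₂ : (∫ s in (0:ℝ)..t, ∫ u in (0:ℝ)..1, ρ₂ s u * deriv (deriv H) u)
          = -c ^ 2 * ∫ s in (0:ℝ)..t, a₂ s := by
        rw [intervalIntegral.integral_congr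
          (fun s _ => hinner ρ₂ hsec₂ hb₂ s), intervalIntegral.integral_const_mul]
      rw [r₁] at e₁
      rw [r₂] at e₂
      have : φ t = -c ^ 2 * (∫ s in (0:ℝ)..t, a₁ s) - -c ^ 2 * (∫ s in (0:ℝ)..t, a₂ s) := by
        rw [hφdef]
        simp only
        rw [← e₁, ← e₂]
        ring
      rw [this, ← mul_sub, ← intervalIntegral.integral_sub (haII 0 t) (haII₂ 0 t)]
    have hφ0 : ∀ t ∈ Icc (0:ℝ) T, φ t = 0 := volterra_zero hφm hφb hvolterra
    -- conclude for this n
    intro t ht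
    have hsplit : (∫ u in (0:ℝ)..1, (ρ₁ t u - ρ₂ t u) * Real.cos ((n:ℝ) * Real.pi * u))
        = a₁ t - a₂ t := by
      rw [ha₁def, ha₂def]
      simp only
      rw [← intervalIntegral.integral_sub (hII₁ t) (hII₂ t)]
      refine intervalIntegral.integral_congr fun u _ => ?_
      rw [hHdef]
      ring
    rw [hsplit]
    exact hφ0 t ht
  -- apply completeness of the cosine system
  intro t ht
  have hdm : Measurable (fun u => ρ₁ t u - ρ₂ t u) := (hsec₁ t).sub (hsec₂ t)
  have hdb : ∀ u, |ρ₁ t u - ρ₂ t u| ≤ 1 := by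
    intro u
    rw [abs_sub_le_iff]
    constructor
    · linarith [(hrange₁ t u).2, (hrange₂ t u).1]
    · linarith [(hrange₂ t u).2, (hrange₁ t u).1]
  have hae := cos_complete hdm hdb (fun n => main n t ht)
  filter_upwards [hae] with u hu
  have : ρ₁ t u - ρ₂ t u = 0 := hu
  linarith
end
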